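/- arXiv:2103.00341 — 4 statements merged into one kernel-verified Lean document; each statement's English description precedes it below -/
import Mathlib

section
/- For a graph G of order n with maximum degree Δ, and any t ≥ 1, the maximum degree of M^t(G) equals max(2^{t-1}(n+1) - 1, 2^t·Δ). -/
open SimpleGraph

abbrev MycVert (V : Type) : Type := V ⊕ V ⊕ Unit

def mycAdj {V : Type} (G : SimpleGraph V) : MycVert V → MycVert V → Prop
  | Sum.inl a, Sum.inl b => G.Adj a b
  | Sum.inl a, Sum.inr (Sum.inl b) => G.Adj a b
  | Sum.inr (Sum.inl a), Sum.inl b => G.Adj a b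
  | Sum.inr (Sum.inl _), Sum.inr (Sum.inr _) => True
  | Sum.inr (Sum.inr _), Sum.inr (Sum.inl _) => True
  | _, _ => False

/-- The Mycielski graph of `G`: `Sum.inl v` are original vertices, `Sum.inr (Sum.inl v)`
their copies, and `Sum.inr (Sum.inr ())` is the root. -/
def mycielski {V : Type} (G : SimpleGraph V) : SimpleGraph (MycVert V) where
  Adj := mycAdj G
  symm := ⟨by
    rintro (a | a | a) (b | b | b) h <;>
      first | exact G.adj_symm h | trivial | exact h.elim⟩
  loopless := ⟨by
    rintro (a | a | a) h <;> first | exact G.irrefl h | exact h⟩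

def IterMycVert (V : Type) : ℕ → Type
  | 0 => V
  | t + 1 => MycVert (IterMycVert V t)

/-- The `t`-th iterated Mycielski graph. -/
def iterMycielski {V : Type} (G : SimpleGraph V) : (t : ℕ) → SimpleGraph (IterMycVert V t)
  | 0 => G
  | t + 1 => mycielski (iterMycielski G t)

instance iterMycVertFintype (V : Type) [Fintype V] : (t : ℕ) → Fintype (IterMycVert V t)
  | 0 => inferInstanceAs (Fintype V)
  | t + 1 => letI := iterMycVertFintype V t
             inferInstanceAs (Fintype (MycVert (IterMycVert V t)))

/-- `f` is an `L(2,1)`-labeling of `G`. -/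
def IsL21Labeling {V : Type} (G : SimpleGraph V) (f : V → ℕ) : Prop :=
  (∀ x y, G.Adj x y → 2 ≤ ((f x : ℤ) - (f y : ℤ)).natAbs) ∧
  (∀ x y, G.dist x y = 2 → f x ≠ f y)

/-- The `L(2,1)`-labeling number `λ(G)`: the least `k` such that `G` has an
`L(2,1)`-labeling with labels in `{0, …, k}`. -/
noncomputable def lambdaNumber {V : Type} (G : SimpleGraph V) : ℕ :=
  sInf {k | ∃ f : V → ℕ, IsL21Labeling G f ∧ ∀ v, f v ≤ k}

section Aux
open scoped Classical

def eInl {V : Type} (G : SimpleGraph V) (v : V) :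
    ((mycielski G).neighborSet (Sum.inl v)) ≃ ((G.neighborSet v) ⊕ (G.neighborSet v)) where
  toFun := fun ⟨x, hx⟩ => match x, hx with
    | Sum.inl b, hb => Sum.inl ⟨b, hb⟩
    | Sum.inr (Sum.inl b), hb => Sum.inr ⟨b, hb⟩
  invFun := fun s => match s with
    | Sum.inl ⟨b, hb⟩ => ⟨Sum.inl b, hb⟩
    | Sum.inr ⟨b, hb⟩ => ⟨Sum.inr (Sum.inl b), hb⟩
  left_inv := by rintro ⟨(b | b | b), hb⟩ <;> first | rfl | exact hb.elim
  right_inv := by rintro (⟨b, hb⟩ | ⟨b, hb⟩) <;> rfl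

def eCopy {V : Type} (G : SimpleGraph V) (v : V) :
    ((mycielski G).neighborSet (Sum.inr (Sum.inl v))) ≃ ((G.neighborSet v) ⊕ Unit) where
  toFun := fun ⟨x, hx⟩ => match x, hx with
    | Sum.inl b, hb => Sum.inl ⟨b, hb⟩
    | Sum.inr (Sum.inr _), _ => Sum.inr ()
  invFun := fun s => match s with
    | Sum.inl ⟨b, hb⟩ => ⟨Sum.inl b, hb⟩
    | Sum.inr _ => ⟨Sum.inr (Sum.inr ()), trivial⟩
  left_inv := by rintro ⟨(b | b | b), hb⟩ <;> first | rfl | exact hb.elim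
  right_inv := by rintro (⟨b, hb⟩ | ⟨⟩) <;> rfl

def eRoot {V : Type} (G : SimpleGraph V) :
    ((mycielski G).neighborSet (Sum.inr (Sum.inr ()))) ≃ V where
  toFun := fun ⟨x, hx⟩ => match x, hx with
    | Sum.inr (Sum.inl b), _ => b
  invFun := fun b => ⟨Sum.inr (Sum.inl b), trivial⟩
  left_inv := by rintro ⟨(b | b | b), hb⟩ <;> first | rfl | exact hb.elim
  right_inv := fun b => rfl

variable {V : Type} [Fintype V] (G : SimpleGraph V)

lemma deg_inl (v : V) : (mycielski G).degree (Sum.inl v) = 2 * G.degree v := by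
  rw [← card_neighborSet_eq_degree, ← card_neighborSet_eq_degree,
    Fintype.card_congr (eInl G v), Fintype.card_sum]
  ring

lemma deg_copy (v : V) : (mycielski G).degree (Sum.inr (Sum.inl v)) = G.degree v + 1 := by
  rw [← card_neighborSet_eq_degree, ← card_neighborSet_eq_degree,
    Fintype.card_congr (eCopy G v), Fintype.card_sum, Fintype.card_unit]

lemma deg_root (u : Unit) : (mycielski G).degree (Sum.inr (Sum.inr u)) = Fintype.card V := by
  rw [← card_neighborSet_eq_degree]
  cases u
  exact Fintype.card_congr (eRoot G)

lemma myc_maxDegree : (mycielski G).maxDegree = max (Fintype.card V) (2 * G.maxDegree) := by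
  apply le_antisymm
  · apply maxDegree_le_of_forall_degree_le
    rintro (v | v | u)
    · rw [deg_inl]
      exact le_max_of_le_right (by
        have := G.degree_le_maxDegree v; omega)
    · rw [deg_copy]
      exact le_max_of_le_left (G.degree_lt_card_verts v)
    · rw [deg_root]
      exact le_max_left _ _
  · apply max_le
    · rw [← deg_root G ()]
      exact degree_le_maxDegree _ _
    · by_cases h : Nonempty V
      · obtain ⟨v, hv⟩ := G.exists_maximal_degree_vertex
        rw [hv, ← deg_inl G v]
        exact degree_le_maxDegree _ _
      · have : G.maxDegree = 0 := Nat.le_zero.mp <| maxDegree_le_of_forall_degree_le _ _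
          (fun v => absurd ⟨v⟩ h)
        simp [this]


lemma card_iterMycVert (V : Type) [Fintype V] (n : ℕ) (hn : Fintype.card V = n) :
    ∀ t : ℕ, Fintype.card (IterMycVert V t) = 2 ^ t * (n + 1) - 1
  | 0 => by simp only [pow_zero, one_mul, Nat.add_sub_cancel]; exact hn
  | t + 1 => by
    have ih := card_iterMycVert V n hn t
    have h1 : 1 ≤ 2 ^ t * (n + 1) := Nat.one_le_iff_ne_zero.mpr (by positivity)
    have hcard : Fintype.card (IterMycVert V (t + 1))
        = 2 * Fintype.card (IterMycVert V t) + 1 := by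
      show Fintype.card (MycVert (IterMycVert V t)) = _
      rw [Fintype.card_sum, Fintype.card_sum, Fintype.card_unit]
      ring
    have h2 : 2 ^ (t + 1) * (n + 1) = 2 * (2 ^ t * (n + 1)) := by rw [pow_succ]; ring
    rw [hcard, ih]
    omega

end Aux

open scoped Classical in
/-- For a graph `G` of order `n` with maximum degree `Δ`, and any `t ≥ 1`, the maximum degree
of `M^t(G)` equals `max (2^(t-1) * (n+1) - 1) (2^t * Δ)`. -/
theorem iterMycielski_maxDegree {V : Type} [Fintype V] (G : SimpleGraph V) (n t : ℕ)
    (hn : Fintype.card V = n) (ht : 1 ≤ t) :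
    (iterMycielski G t).maxDegree =
      max (2 ^ (t - 1) * (n + 1) - 1) (2 ^ t * G.maxDegree) := by

  induction t, ht using Nat.le_induction with
  | base =>
    show (mycielski G).maxDegree = _
    rw [myc_maxDegree, hn]
    norm_num
  | succ t ht ih =>
    show (mycielski (iterMycielski G t)).maxDegree = _
    rw [myc_maxDegree, ih, card_iterMycVert V n hn t]
    have h1 : 1 ≤ 2 ^ (t - 1) * (n + 1) := Nat.one_le_iff_ne_zero.mpr (by positivity)
    have h2 : 2 ^ t * (n + 1) = 2 * (2 ^ (t - 1) * (n + 1)) := by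
      conv_lhs => rw [show t = (t - 1) + 1 by omega, pow_succ]
      ring
    have h3 : 2 ^ (t + 1) * G.maxDegree = 2 * (2 ^ t * G.maxDegree) := by
      rw [pow_succ]; ring
    have h4 : (t + 1) - 1 = t := rfl
    rw [h4]
    omega
end

section
/- If G is a graph of diameter 2 with maximum degree Δ, then λ(M(G)) ≤ 2(Δ² + 1). -/
open SimpleGraph

section Auxiliary
open Finset

section Helpers

lemma zval_inj {m : ℕ} [NeZero m] {x y : ZMod m} (h : x.val = y.val) : x = y := by
  have hx : ((x.val : ℕ) : ZMod m) = x := ZMod.natCast_rightInverse x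
  rw [← hx, h, ZMod.natCast_rightInverse y]

lemma zval_sub {m : ℕ} [NeZero m] {x y : ZMod m} (h : y.val ≤ x.val) :
    (x - y).val = x.val - y.val := by
  have hx : ((x.val : ℕ) : ZMod m) = x := ZMod.natCast_rightInverse x
  have hy : ((y.val : ℕ) : ZMod m) = y := ZMod.natCast_rightInverse y
  have hxy : x - y = ((x.val - y.val : ℕ) : ZMod m) := by rw [Nat.cast_sub h, hx, hy]
  rw [hxy, ZMod.val_cast_of_lt (by have := x.val_lt; omega)]

lemma zval_add_one {m : ℕ} [NeZero m] {x : ZMod m} (h : x.val + 1 < m) :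
    (x + 1).val = x.val + 1 := by
  have hx : ((x.val : ℕ) : ZMod m) = x := ZMod.natCast_rightInverse x
  have hxy : x + 1 = ((x.val + 1 : ℕ) : ZMod m) := by push_cast [hx]; ring
  rw [hxy, ZMod.val_cast_of_lt h]

lemma zval_neg_one {m : ℕ} [NeZero m] (hm : 1 ≤ m) : (-1 : ZMod m).val = m - 1 := by
  obtain ⟨k, rfl⟩ : ∃ k, m = k + 1 := ⟨m - 1, by omega⟩
  simp [ZMod.val_neg_one k]

lemma zcast_val_add_one {m : ℕ} [NeZero m] {x y : ZMod m} (h : y.val = x.val + 1) :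
    y = x + 1 := by
  have hx : ((x.val : ℕ) : ZMod m) = x := ZMod.natCast_rightInverse x
  have hy : ((y.val : ℕ) : ZMod m) = y := ZMod.natCast_rightInverse y
  rw [← hy, h]; push_cast [hx]; ring

variable {V : Type} {G : SimpleGraph V}

lemma edist_two_exists_mid {u v : V} (h : G.edist u v = 2) :
    ∃ w, G.Adj u w ∧ G.Adj w v := by
  obtain ⟨p, hp⟩ := SimpleGraph.exists_walk_of_edist_eq_coe (k := 2) (u := u) (v := v)
    (by exact_mod_cast h)
  refine ⟨p.getVert 1, ?_, ?_⟩
  · have := p.adj_getVert_succ (i := 0) (by omega)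
    simpa [Walk.getVert_zero] using this
  · have := p.adj_getVert_succ (i := 1) (by omega)
    have h2 : p.getVert 2 = v := by
      have := p.getVert_length; rwa [hp] at this
    rwa [h2] at this

lemma edist_forced_two {u v : V} (hne : u ≠ v) (hnadj : ¬ G.Adj u v)
    (hle : G.edist u v ≤ 2) : G.edist u v = 2 := by
  have h0 : G.edist u v ≠ 0 := fun h => hne (SimpleGraph.edist_eq_zero_iff.mp h)
  have h1 : G.edist u v ≠ 1 := fun h => hnadj (SimpleGraph.edist_eq_one_iff_adj.mp h)
  have htop : G.edist u v ≠ ⊤ := fun h => by rw [h] at hle; exact absurd hle (by simp)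
  lift G.edist u v to ℕ using htop with k hk
  have hle' : k ≤ 2 := by exact_mod_cast hle
  have h0' : k ≠ 0 := by exact_mod_cast h0
  have h1' : k ≠ 1 := by exact_mod_cast h1
  have : k = 2 := by omega
  exact_mod_cast this

end Helpers

section Moore

variable {V : Type} [Fintype V] [DecidableEq V] (G : SimpleGraph V) [DecidableRel G.Adj]

lemma moore_bound (h2 : ∀ u v : V, G.edist u v ≤ 2) (Δ : ℕ) (hΔ : ∀ v, G.degree v ≤ Δ) :
    Fintype.card V ≤ Δ ^ 2 + 1 := by
  rcases isEmpty_or_nonempty V with h | h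
  · rw [Fintype.card_eq_zero]; omega
  obtain v := Classical.arbitrary V
  have hsub : (Finset.univ : Finset V) ⊆
      insert v ((G.neighborFinset v) ∪
        (G.neighborFinset v).biUnion fun w => (G.neighborFinset w).erase v) := by
    intro u _
    by_cases h0 : u = v
    · simp [h0]
    by_cases h1 : G.Adj v u
    · exact Finset.mem_insert_of_mem (Finset.mem_union_left _
        ((SimpleGraph.mem_neighborFinset _ _ _).mpr h1))
    · have hdist : G.edist v u = 2 :=
        edist_forced_two (fun h => h0 h.symm) h1 (h2 v u)
      obtain ⟨w, hw1, hw2⟩ := edist_two_exists_mid hdist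
      refine Finset.mem_insert_of_mem (Finset.mem_union_right _ ?_)
      refine Finset.mem_biUnion.mpr ⟨w, (SimpleGraph.mem_neighborFinset _ _ _).mpr hw1, ?_⟩
      exact Finset.mem_erase.mpr ⟨h0, (SimpleGraph.mem_neighborFinset _ _ _).mpr hw2⟩
  have hcard := Finset.card_le_card hsub
  rw [Finset.card_univ] at hcard
  have h3 : (G.neighborFinset v).card ≤ Δ := by
    rw [G.card_neighborFinset_eq_degree v]; exact hΔ v
  have h4 : ((G.neighborFinset v).biUnion fun w => (G.neighborFinset w).erase v).card
      ≤ Δ * (Δ - 1) := by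
    refine le_trans (Finset.card_biUnion_le_card_mul _ _ (Δ - 1) ?_) ?_
    · intro w hw
      rw [Finset.card_erase_of_mem]
      · have := hΔ w; rw [G.card_neighborFinset_eq_degree w]; omega
      · rw [SimpleGraph.mem_neighborFinset] at hw ⊢; exact hw.symm
    · exact Nat.mul_le_mul h3 le_rfl
  have h5 := Finset.card_insert_le v ((G.neighborFinset v) ∪
        (G.neighborFinset v).biUnion fun w => (G.neighborFinset w).erase v)
  have h6 := Finset.card_union_le (G.neighborFinset v)
    ((G.neighborFinset v).biUnion fun w => (G.neighborFinset w).erase v)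
  have h7 : Δ + Δ * (Δ - 1) ≤ Δ ^ 2 := by
    rcases Nat.eq_zero_or_pos Δ with hΔ0 | hΔ0
    · subst hΔ0; simp
    · obtain ⟨d, rfl⟩ : ∃ d, Δ = d + 1 := ⟨Δ - 1, by omega⟩
      have h8 : (d + 1) - 1 = d := by omega
      rw [h8]
      have h9 : (d + 1) ^ 2 = (d+1) * d + (d+1) := by ring
      omega
  omega

lemma maxDegree_two_le (hdiam : G.ediam = 2) : 2 ≤ G.maxDegree := by
  have hex : ∃ u v : V, ¬ G.edist u v ≤ 1 := by
    by_contra hcon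
    push_neg at hcon
    have h := SimpleGraph.ediam_le_of_edist_le hcon
    rw [hdiam] at h
    exact absurd h (by norm_num)
  obtain ⟨u, v, huv⟩ := hex
  have hle : G.edist u v ≤ 2 := hdiam ▸ SimpleGraph.edist_le_ediam
  have htop : G.edist u v ≠ ⊤ := fun h => by rw [h] at hle; exact absurd hle (by simp)
  have h2 : G.edist u v = 2 := by
    have hlt : 1 < G.edist u v := not_le.mp huv
    lift G.edist u v to ℕ using htop with k hk
    have h1 : 1 < k := by exact_mod_cast hlt
    have h2 : k ≤ 2 := by exact_mod_cast hle
    have : k = 2 := by omega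
    exact_mod_cast this
  have hne : u ≠ v := by
    rintro rfl
    rw [SimpleGraph.edist_self] at h2
    exact absurd h2 (by norm_num)
  obtain ⟨w, hw1, hw2⟩ := edist_two_exists_mid h2
  have hsub : ({u, v} : Finset V) ⊆ G.neighborFinset w := by
    intro x hx
    rcases Finset.mem_insert.mp hx with rfl | hx
    · exact (SimpleGraph.mem_neighborFinset _ _ _).mpr hw1.symm
    · rw [Finset.mem_singleton] at hx; subst hx
      exact (SimpleGraph.mem_neighborFinset _ _ _).mpr hw2
  calc 2 = ({u, v} : Finset V).card := (Finset.card_pair hne).symm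
    _ ≤ (G.neighborFinset w).card := Finset.card_le_card hsub
    _ = G.degree w := G.card_neighborFinset_eq_degree w
    _ ≤ G.maxDegree := G.degree_le_maxDegree w

end Moore

section Greedy
variable {V : Type} [Fintype V] [DecidableEq V] (G : SimpleGraph V) [DecidableRel G.Adj]

lemma shift_core (s : Finset V) (x : V) (c : ℕ) (hc : 1 ≤ c) (a' : V → ℕ)
    (h1 : ∀ p ∈ s.erase x, ∀ q ∈ s.erase x, p ≠ q → a' p ≠ a' q)
    (h2 : ∀ p ∈ s.erase x, ∀ q ∈ s.erase x, G.Adj p q → a' p + 2 ≤ a' q ∨ a' q + 2 ≤ a' p)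
    (h3 : ∀ p ∈ s.erase x, 1 ≤ a' p)
    (h4 : ∀ p ∈ s.erase x, G.Adj x p → 2 ≤ a' p) :
    ∃ a : V → ℕ,
      (∀ p ∈ s, ∀ q ∈ s, p ≠ q → a p ≠ a q) ∧
      (∀ p ∈ s, ∀ q ∈ s, G.Adj p q → a p + 2 ≤ a q ∨ a q + 2 ≤ a p) ∧
      (∀ p ∈ s, c ≤ a p) ∧ a x = c ∧ (∀ y, y ≠ x → a y = a' y + c) := by
  refine ⟨fun y => if y = x then c else a' y + c, ?_, ?_, ?_, if_pos rfl, fun y hy => if_neg hy⟩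
  · intro p hp q hq hpq
    beta_reduce
    by_cases hpx : p = x
    · subst hpx
      have hqx : q ≠ p := fun h => hpq h.symm
      rw [if_pos rfl, if_neg hqx]
      have := h3 q (Finset.mem_erase.mpr ⟨hqx, hq⟩); omega
    · rw [if_neg hpx]
      by_cases hqx : q = x
      · subst hqx
        rw [if_pos rfl]
        have := h3 p (Finset.mem_erase.mpr ⟨hpx, hp⟩); omega
      · rw [if_neg hqx]
        intro h
        exact h1 p (Finset.mem_erase.mpr ⟨hpx, hp⟩) q (Finset.mem_erase.mpr ⟨hqx, hq⟩) hpq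
          (by omega)
  · intro p hp q hq hadj
    beta_reduce
    by_cases hpx : p = x
    · subst hpx
      have hqx : q ≠ p := fun h => G.irrefl (h ▸ hadj)
      rw [if_pos rfl, if_neg hqx]
      have := h4 q (Finset.mem_erase.mpr ⟨hqx, hq⟩) hadj; omega
    · rw [if_neg hpx]
      by_cases hqx : q = x
      · subst hqx
        rw [if_pos rfl]
        have := h4 p (Finset.mem_erase.mpr ⟨hpx, hp⟩) hadj.symm; omega
      · rw [if_neg hqx]
        have := h2 p (Finset.mem_erase.mpr ⟨hpx, hp⟩) q (Finset.mem_erase.mpr ⟨hqx, hq⟩) hadj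
        omega
  · intro p hp
    beta_reduce
    by_cases hpx : p = x
    · subst hpx; rw [if_pos rfl]
    · rw [if_neg hpx]
      have := h3 p (Finset.mem_erase.mpr ⟨hpx, hp⟩); omega

lemma greedy_step (Δ : ℕ) (hΔ : ∀ v, G.degree v ≤ Δ) :
    ∀ (N : ℕ) (s : Finset V), s.card ≤ N → ∀ w : V,
    ∃ a : V → ℕ,
      (∀ x ∈ s, ∀ y ∈ s, x ≠ y → a x ≠ a y) ∧
      (∀ x ∈ s, ∀ y ∈ s, G.Adj x y → a x + 2 ≤ a y ∨ a y + 2 ≤ a x) ∧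
      (∀ x ∈ s, 1 ≤ a x) ∧
      (∀ x ∈ s, G.Adj w x → 2 ≤ a x) ∧
      (∀ x ∈ s, a x ≤ s.card + min s.card Δ) := by
  intro N
  induction N with
  | zero =>
    intro s hs w
    have : s = ∅ := Finset.card_eq_zero.mp (Nat.le_zero.mp hs)
    subst this
    exact ⟨fun _ => 0, by simp, by simp, by simp, by simp, by simp⟩
  | succ N ih =>
    intro s hs w
    rcases s.eq_empty_or_nonempty with rfl | hne
    · exact ⟨fun _ => 0, by simp, by simp, by simp, by simp, by simp⟩
    have hpos : 1 ≤ s.card := Finset.card_pos.mpr hne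
    by_cases hcase : ∃ x ∈ s, ¬ G.Adj w x
    · obtain ⟨x, hxs, hxw⟩ := hcase
      obtain ⟨a', h1, h2, h3, h4, h5⟩ := ih (s.erase x)
        (by rw [Finset.card_erase_of_mem hxs]; omega) x
      obtain ⟨a, g1, g2, g3, g4, g5⟩ := shift_core G s x 1 le_rfl a' h1 h2 h3 h4
      refine ⟨a, g1, g2, fun p hp => g3 p hp, ?_, ?_⟩
      · intro p hp hadj
        rcases eq_or_ne p x with rfl | hpx
        · exact absurd hadj hxw
        · rw [g5 p hpx]
          have := h3 p (Finset.mem_erase.mpr ⟨hpx, hp⟩); omega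
      · intro p hp
        have hminle : min (s.card - 1) Δ ≤ min s.card Δ :=
          min_le_min (by omega) le_rfl
        rcases eq_or_ne p x with rfl | hpx
        · rw [g4]; omega
        · rw [g5 p hpx]
          have := h5 p (Finset.mem_erase.mpr ⟨hpx, hp⟩)
          rw [Finset.card_erase_of_mem hxs] at this
          omega
    · push_neg at hcase
      have hsub : s ⊆ G.neighborFinset w := fun x hx =>
        (SimpleGraph.mem_neighborFinset _ _ _).mpr (hcase x hx)
      have hsΔ : s.card ≤ Δ := le_trans (Finset.card_le_card hsub)
        (le_trans (le_of_eq (G.card_neighborFinset_eq_degree w)) (hΔ w))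
      obtain ⟨x, hxs⟩ := hne
      obtain ⟨a', h1, h2, h3, h4, h5⟩ := ih (s.erase x)
        (by rw [Finset.card_erase_of_mem hxs]; omega) x
      obtain ⟨a, g1, g2, g3, g4, g5⟩ := shift_core G s x 2 (by omega) a' h1 h2 h3 h4
      have hmin1 : min (s.card - 1) Δ = s.card - 1 := Nat.min_eq_left (by omega)
      have hmin2 : min s.card Δ = s.card := Nat.min_eq_left hsΔ
      refine ⟨a, g1, g2, fun p hp => le_trans (by omega) (g3 p hp), fun p hp _ => g3 p hp, ?_⟩
      intro p hp
      rcases eq_or_ne p x with rfl | hpx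
      · rw [g4]; omega
      · rw [g5 p hpx]
        have := h5 p (Finset.mem_erase.mpr ⟨hpx, hp⟩)
        rw [Finset.card_erase_of_mem hxs, hmin1] at this
        omega

lemma greedy_main [Nonempty V] (Δ : ℕ) (hΔ : ∀ v, G.degree v ≤ Δ) :
    ∃ a : V → ℕ, Function.Injective a ∧
      (∀ x y, G.Adj x y → a x + 2 ≤ a y ∨ a y + 2 ≤ a x) ∧
      ∀ v, a v ≤ (Fintype.card V - 1) + Δ := by
  obtain v0 := Classical.arbitrary V
  obtain ⟨a', h1, h2, h3, h4, h5⟩ := greedy_step G Δ hΔ (Finset.univ.erase v0).card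
    (Finset.univ.erase v0) le_rfl v0
  have hmem : ∀ y : V, y ≠ v0 → y ∈ Finset.univ.erase v0 := fun y hy =>
    Finset.mem_erase.mpr ⟨hy, Finset.mem_univ y⟩
  have hcard : (Finset.univ.erase v0).card = Fintype.card V - 1 := by
    rw [Finset.card_erase_of_mem (Finset.mem_univ v0), Finset.card_univ]
  refine ⟨fun y => if y = v0 then 0 else a' y, ?_, ?_, ?_⟩
  · intro p q h
    simp only at h
    by_cases hp : p = v0
    · subst hp
      by_cases hq : q = p
      · exact hq.symm
      · rw [if_pos rfl, if_neg hq] at h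
        have := h3 q (hmem q hq); omega
    · by_cases hq : q = v0
      · subst hq
        rw [if_pos rfl, if_neg hp] at h
        have := h3 p (hmem p hp); omega
      · rw [if_neg hp, if_neg hq] at h
        by_contra hne
        exact h1 p (hmem p hp) q (hmem q hq) hne h
  · intro p q hadj
    simp only
    by_cases hp : p = v0
    · subst hp
      have hq : q ≠ p := fun h => G.irrefl (h ▸ hadj)
      rw [if_pos rfl, if_neg hq]
      have := h4 q (hmem q hq) hadj; omega
    · rw [if_neg hp]
      by_cases hq : q = v0
      · subst hq
        rw [if_pos rfl]
        have := h4 p (hmem p hp) hadj.symm; omega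
      · rw [if_neg hq]
        have := h2 p (hmem p hp) q (hmem q hq) hadj; omega
  · intro p
    simp only
    by_cases hp : p = v0
    · rw [if_pos hp]; omega
    · rw [if_neg hp]
      have := h5 p (hmem p hp)
      have h6 : min (Finset.univ.erase v0).card Δ ≤ Δ := Nat.min_le_right _ _
      omega

end Greedy

theorem ore_cycle {W : Type} [Fintype W] [DecidableEq W] (H : SimpleGraph W)
    [DecidableRel H.Adj] (m : ℕ) (hmW : Fintype.card W = m) (hm : 3 ≤ m)
    (hore : ∀ u v : W, u ≠ v → ¬H.Adj u v → m ≤ H.degree u + H.degree v) :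
    ∃ σ : ZMod m ≃ W, ∀ i, H.Adj (σ i) (σ (i + 1)) := by
  haveI : NeZero m := ⟨by omega⟩
  have hcardZ : Fintype.card (ZMod m) = m := ZMod.card m
  classical
  let Φ : (ZMod m ≃ W) → ℕ := fun τ => (Finset.univ.filter fun k => H.Adj (τ k) (τ (k+1))).card
  obtain ⟨σ, -, hmax⟩ := Finset.exists_max_image Finset.univ Φ
    ⟨Fintype.equivOfCardEq (by rw [hcardZ, hmW]), Finset.mem_univ _⟩
  refine ⟨σ, ?_⟩
  by_contra hbad
  push_neg at hbad
  obtain ⟨i, hi⟩ := hbad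
  -- basic facts about u, v
  haveI : Fact (1 < m) := ⟨by omega⟩
  have hone : (1 : ZMod m) ≠ 0 := one_ne_zero
  have hii1 : i ≠ i + 1 := fun h => hone (by linear_combination -h)
  set u := σ i with hu
  set v := σ (i+1) with hv
  have huv : u ≠ v := fun h => hii1 (σ.injective h)
  -- neighbor index sets
  set A : Finset (ZMod m) := Finset.univ.filter (fun k => H.Adj u (σ k)) with hA
  set B : Finset (ZMod m) := Finset.univ.filter (fun k => H.Adj v (σ (k+1))) with hB
  have hAcard : A.card = H.degree u := by
    rw [← SimpleGraph.card_neighborFinset_eq_degree H u]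
    refine Finset.card_bij (fun k _ => σ k) ?_ ?_ ?_
    · intro k hk
      rw [SimpleGraph.mem_neighborFinset]
      exact (Finset.mem_filter.mp hk).2
    · intro k1 h1 k2 h2 h; exact σ.injective h
    · intro w hw
      refine ⟨σ.symm w, Finset.mem_filter.mpr ⟨Finset.mem_univ _, by
        rw [Equiv.apply_symm_apply]; exact (SimpleGraph.mem_neighborFinset _ _ _).mp hw⟩, ?_⟩
      simp
  have hBcard : B.card = H.degree v := by
    rw [← SimpleGraph.card_neighborFinset_eq_degree H v]
    refine Finset.card_bij (fun k _ => σ (k+1)) ?_ ?_ ?_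
    · intro k hk
      rw [SimpleGraph.mem_neighborFinset]
      exact (Finset.mem_filter.mp hk).2
    · intro k1 h1 k2 h2 h
      have := σ.injective h
      exact add_right_cancel this
    · intro w hw
      refine ⟨σ.symm w - 1, Finset.mem_filter.mpr ⟨Finset.mem_univ _, ?_⟩, ?_⟩
      · rw [sub_add_cancel, Equiv.apply_symm_apply]
        exact (SimpleGraph.mem_neighborFinset _ _ _).mp hw
      · simp
  have hiA : i ∉ A := by
    simp only [hA, Finset.mem_filter]
    rintro ⟨-, h⟩
    exact H.irrefl (by rwa [← hu] at h)
  have hiB : i ∉ B := by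
    simp only [hB, Finset.mem_filter]
    rintro ⟨-, h⟩
    exact H.irrefl (by rwa [← hv] at h)
  have hABne : (A ∩ B).Nonempty := by
    rw [← Finset.card_pos]
    have hsub : A ∪ B ⊆ Finset.univ.erase i := by
      intro k hk
      refine Finset.mem_erase.mpr ⟨?_, Finset.mem_univ _⟩
      rintro rfl
      rcases Finset.mem_union.mp hk with h | h
      · exact hiA h
      · exact hiB h
    have h1 : (A ∪ B).card ≤ m - 1 := by
      refine le_trans (Finset.card_le_card hsub) ?_
      rw [Finset.card_erase_of_mem (Finset.mem_univ i), Finset.card_univ, hcardZ]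
    have h2 := Finset.card_union_add_card_inter A B
    have h3 := hore u v huv hi
    omega
  obtain ⟨j, hj⟩ := hABne
  have hjA : H.Adj u (σ j) := (Finset.mem_filter.mp (Finset.mem_inter.mp hj).1).2
  have hjB : H.Adj v (σ (j+1)) := (Finset.mem_filter.mp (Finset.mem_inter.mp hj).2).2
  have hji : j ≠ i := by rintro rfl; exact hiA (Finset.mem_inter.mp hj).1
  have hji1 : j ≠ i + 1 := by
    rintro rfl
    rw [← hv] at hjA
    exact hi hjA
  -- offset function
  set e : ZMod m → ℕ := fun k => (k - (i+1)).val with he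
  have he_inj : ∀ {k k' : ZMod m}, e k = e k' → k = k' := by
    intro k k' h
    have := zval_inj (m := m) h
    exact sub_left_injective this
  set d : ℕ := e j with hd
  have hei : e i = m - 1 := by
    have h1 : i - (i+1) = -1 := by ring
    show (i - (i+1)).val = m - 1
    rw [h1, zval_neg_one (by omega)]
  have hei1 : e (i+1) = 0 := by
    show ((i+1) - (i+1)).val = 0
    simp
  have hd_le : d ≤ m - 1 := by
    have h := (j - (i+1)).val_lt
    have hb : d = (j - (i+1)).val := rfl
    omega
  have hd_lt : d < m - 1 := by
    rcases lt_or_eq_of_le hd_le with h | h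
    · exact h
    · exact absurd (he_inj (h.trans hei.symm)) hji
  have hd_pos : 1 ≤ d := by
    rcases Nat.eq_zero_or_pos d with h | h
    · exact absurd (he_inj (h.trans hei1.symm)) hji1
    · exact h
  have hestep : ∀ k : ZMod m, e k + 1 < m → e (k + 1) = e k + 1 := by
    intro k hk
    show ((k+1) - (i+1)).val = (k - (i+1)).val + 1
    have h1 : (k+1) - (i+1) = (k - (i+1)) + 1 := by ring
    rw [h1, zval_add_one hk]
  -- the reversal map
  set r : ZMod m → ZMod m := fun k => if e k ≤ d then (i+1+j) - k else k with hr
  have hrval : ∀ k, e k ≤ d → r k = (i+1+j) - k ∧ e (r k) = d - e k := by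
    intro k hk
    have h1 : r k = (i+1+j) - k := if_pos hk
    refine ⟨h1, ?_⟩
    rw [h1]
    show ((i+1+j) - k - (i+1)).val = _
    have h2 : (i+1+j) - k - (i+1) = (j - (i+1)) - (k - (i+1)) := by ring
    rw [h2, zval_sub hk]
  have hrinv : Function.Involutive r := by
    intro k
    by_cases hk : e k ≤ d
    · obtain ⟨h1, h2⟩ := hrval k hk
      obtain ⟨h3, -⟩ := hrval (r k) (by omega)
      rw [h3, h1]
      ring
    · have h1 : r k = k := if_neg hk
      rw [h1, h1]
  set σ' : ZMod m ≃ W := (Function.Involutive.toPerm r hrinv).trans σ with hσ'def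
  have hσ' : ∀ k, σ' k = σ (r k) := fun k => rfl
  -- values of r at the special points
  have hri : r i = i := by
    apply if_neg
    rw [hei]
    omega
  have hri1 : r (i+1) = j := by
    have := (hrval (i+1) (by rw [hei1]; omega)).1
    rw [this]
    ring
  have hrj : r j = i + 1 := by
    have := (hrval j le_rfl).1
    rw [this]
    ring
  have hej1 : e (j+1) = d + 1 := hestep j (by omega)
  have hrj1 : r (j+1) = j + 1 := by
    apply if_neg
    rw [hej1]
    omega
  -- goodness sets
  set S : Finset (ZMod m) := Finset.univ.filter (fun k => H.Adj (σ k) (σ (k+1))) with hS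
  set S' : Finset (ZMod m) := Finset.univ.filter (fun k => H.Adj (σ' k) (σ' (k+1))) with hS'
  have hiS : i ∉ S := by
    simp only [hS, Finset.mem_filter]
    rintro ⟨-, h⟩
    exact hi h
  have hiS' : i ∈ S' := by
    simp only [hS', Finset.mem_filter]
    exact ⟨Finset.mem_univ _, by rw [hσ', hσ', hri, hri1, ← hu]; exact hjA⟩
  have hjS' : j ∈ S' := by
    simp only [hS', Finset.mem_filter]
    exact ⟨Finset.mem_univ _, by rw [hσ', hσ', hrj, hrj1, ← hv]; exact hjB⟩
  -- pair transfer in the interior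
  set t : ZMod m → ZMod m := fun k => if e k < d then (i+j) - k else k with ht
  have htval : ∀ k, e k < d → t k = (i+j) - k ∧ e (t k) = d - e k - 1 := by
    intro k hk
    have h1 : t k = (i+j) - k := if_pos hk
    refine ⟨h1, ?_⟩
    have h2 : e (k+1) = e k + 1 := hestep k (by omega)
    rw [h1]
    show ((i+j) - k - (i+1)).val = _
    have h3 : (i+j) - k - (i+1) = (j - (i+1)) - ((k+1) - (i+1)) := by ring
    have eb1 : ((k+1) - (i+1)).val = e (k+1) := rfl
    have eb2 : (j - (i+1)).val = d := rfl
    rw [h3, zval_sub (by omega)]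
    omega
  have htinv : Function.Involutive t := by
    intro k
    by_cases hk : e k < d
    · obtain ⟨h1, h2⟩ := htval k hk
      obtain ⟨h3, -⟩ := htval (t k) (by omega)
      rw [h3, h1]
      ring
    · have h1 : t k = k := if_neg hk
      rw [h1, h1]
  have htinj : Function.Injective t := htinv.injective
  -- interior transfer: pairs map to pairs
  have hT2 : ∀ k, k ∈ S → k ≠ i → k ≠ j → t k ∈ S' := by
    intro k hkS hki hkj
    have hkadj : H.Adj (σ k) (σ (k+1)) := (Finset.mem_filter.mp hkS).2
    have hek_ne : e k ≠ d := fun h => hkj (he_inj h)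
    have hek_ne' : e k ≠ m - 1 := fun h => hki (he_inj (by rw [h, ← hei]))
    have hek_lt : e k ≤ m - 1 := by
      have h := (k - (i+1)).val_lt
      have hb : (k - (i+1)).val = e k := rfl
      omega
    by_cases hlt : e k < d
    · obtain ⟨h1, h2⟩ := htval k hlt
      have h2' : e (t k) ≤ d := by omega
      have hstep : e (t k + 1) = e (t k) + 1 := hestep (t k) (by omega)
      -- σ' (t k) = σ (k + 1)
      have hp1 : σ' (t k) = σ (k + 1) := by
        rw [hσ', (hrval (t k) h2').1, h1]
        congr 1
        ring
      -- σ' (t k + 1) = σ k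
      have hp2 : σ' (t k + 1) = σ k := by
        rw [hσ']
        have hin : e (t k + 1) ≤ d := by omega
        rw [(hrval (t k + 1) hin).1, h1]
        congr 1
        ring
      simp only [hS', Finset.mem_filter]
      exact ⟨Finset.mem_univ _, by rw [hp1, hp2]; exact hkadj.symm⟩
    · have h1 : t k = k := if_neg hlt
      have hgt : d < e k := by omega
      have hout1 : r k = k := if_neg (by omega)
      have hstep : e (k + 1) = e k + 1 := hestep k (by omega)
      have hout2 : r (k + 1) = k + 1 := if_neg (by omega)
      simp only [hS', Finset.mem_filter]
      refine ⟨Finset.mem_univ _, ?_⟩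
      rw [h1, hσ', hσ', hout1, hout2]
      exact hkadj
  -- counting
  have himage : insert i (insert j ((S.erase j).image t)) ⊆ S' := by
    intro k hk
    rcases Finset.mem_insert.mp hk with rfl | hk
    · exact hiS'
    rcases Finset.mem_insert.mp hk with rfl | hk
    · exact hjS'
    obtain ⟨k', hk', rfl⟩ := Finset.mem_image.mp hk
    obtain ⟨hk'j, hk'S⟩ := Finset.mem_erase.mp hk'
    have hk'i : k' ≠ i := by rintro rfl; exact hiS hk'S
    exact hT2 k' hk'S hk'i hk'j
  have hti : t i = i := by
    apply if_neg
    rw [hei]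
    omega
  have htj : t j = j := by
    apply if_neg
    omega
  have hinotmem : i ∉ insert j ((S.erase j).image t) := by
    intro h
    rcases Finset.mem_insert.mp h with h | h
    · exact hji h.symm
    · obtain ⟨k', hk', hk'e⟩ := Finset.mem_image.mp h
      have : k' = i := by
        have := congrArg t hk'e
        rwa [htinv k', hti] at this
      subst this
      exact hiS (Finset.mem_erase.mp hk').2
  have hjnotmem : j ∉ (S.erase j).image t := by
    intro h
    obtain ⟨k', hk', hk'e⟩ := Finset.mem_image.mp h
    have : k' = j := by
      have := congrArg t hk'e
      rwa [htinv k', htj] at this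
    subst this
    exact (Finset.mem_erase.mp hk').1 rfl
  have hcount : S.card + 1 ≤ S'.card := by
    have h1 := Finset.card_le_card himage
    rw [Finset.card_insert_of_notMem hinotmem, Finset.card_insert_of_notMem hjnotmem,
      Finset.card_image_of_injective _ htinj] at h1
    have h2 : S.card ≤ (S.erase j).card + 1 := by
      by_cases hjS : j ∈ S
      · rw [Finset.card_erase_of_mem hjS]
        have := Finset.card_pos.mpr ⟨j, hjS⟩
        omega
      · rw [Finset.erase_eq_of_notMem hjS]
        omega
    omega
  have := hmax σ' (Finset.mem_univ _)
  have hΦσ : Φ σ = S.card := rfl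
  have hΦσ' : Φ σ' = S'.card := rfl
  omega

section Ext
variable {V : Type} [Fintype V] [DecidableEq V] (G : SimpleGraph V) [DecidableRel G.Adj]

def extG (G : SimpleGraph V) : SimpleGraph (Option V) where
  Adj x y := match x, y with
    | none, none => False
    | none, some _ => True
    | some _, none => True
    | some a, some b => a ≠ b ∧ ¬ G.Adj a b
  symm := ⟨by
    rintro (_ | a) (_ | b) h
    · exact h
    · trivial
    · trivial
    · exact ⟨Ne.symm h.1, fun h' => h.2 h'.symm⟩⟩
  loopless := ⟨by
    rintro (_ | a) h
    · exact h
    · exact h.1 rfl⟩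

instance : DecidableRel (extG G).Adj := fun x y =>
  match x, y with
  | none, none => isFalse (fun h => h)
  | none, some _ => isTrue trivial
  | some _, none => isTrue trivial
  | some a, some b => instDecidableAnd

lemma extG_adj_some {a b : V} : (extG G).Adj (some a) (some b) ↔ a ≠ b ∧ ¬ G.Adj a b :=
  Iff.rfl

lemma extG_degree (u : V) :
    (extG G).degree (some u) = Fintype.card V - G.degree u := by
  classical
  have hfin : (extG G).neighborFinset (some u) =
      insert none ((Finset.univ.filter (fun b : V => b ≠ u ∧ ¬ G.Adj u b)).image some) := by
    ext w
    cases w with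
    | none =>
      rw [SimpleGraph.mem_neighborFinset]; simp [extG]
    | some b =>
      simp only [SimpleGraph.mem_neighborFinset, Finset.mem_insert, Finset.mem_image,
        Finset.mem_filter, Finset.mem_univ, true_and]
      constructor
      · intro h
        exact Or.inr ⟨b, ⟨fun hbu => h.1 hbu.symm, fun hadj => h.2 hadj⟩, rfl⟩
      · rintro (h | ⟨b', ⟨hb1, hb2⟩, hb3⟩)
        · exact absurd h (by simp)
        · have : b' = b := Option.some_injective _ hb3
          subst this
          exact ⟨fun hub => hb1 hub.symm, hb2⟩
  rw [← SimpleGraph.card_neighborFinset_eq_degree, hfin]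
  rw [Finset.card_insert_of_notMem (by simp)]
  rw [Finset.card_image_of_injective _ (Option.some_injective V)]
  have h1 : (Finset.univ.filter (fun b : V => b ≠ u ∧ ¬ G.Adj u b)) =
      (Finset.univ.filter (fun b : V => ¬ G.Adj u b)).erase u := by
    ext b
    by_cases hb : b = u <;> simp [hb, G.irrefl]
  rw [h1, Finset.card_erase_of_mem (by simp [G.irrefl])]
  have h2 := Finset.card_filter_add_card_filter_not
    (s := (Finset.univ : Finset V)) (p := fun b => G.Adj u b)
  have h3 : (Finset.univ.filter (fun b : V => G.Adj u b)).card = G.degree u := by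
    rw [← SimpleGraph.card_neighborFinset_eq_degree]
    congr 1
    ext b
    simp [SimpleGraph.mem_neighborFinset]
  rw [Finset.card_univ] at h2
  have h4 := G.degree_lt_card_verts u
  omega

lemma exists_gap_order (Δ : ℕ) (hΔ : ∀ v, G.degree v ≤ Δ) (hΔ1 : 1 ≤ Δ)
    (hn : 2 * Δ + 1 ≤ Fintype.card V) :
    ∃ a : V → ℕ, Function.Injective a ∧
      (∀ x y, G.Adj x y → a x + 2 ≤ a y ∨ a y + 2 ≤ a x) ∧
      ∀ v, a v < Fintype.card V := by
  classical
  set n := Fintype.card V with hn_def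
  haveI : NeZero (n + 1) := ⟨Nat.succ_ne_zero n⟩
  have hore : ∀ x y : Option V, x ≠ y → ¬(extG G).Adj x y →
      n + 1 ≤ (extG G).degree x + (extG G).degree y := by
    intro x y hne hnadj
    match x, y with
    | none, none => exact absurd rfl hne
    | none, some b => exact absurd trivial hnadj
    | some a, none => exact absurd trivial hnadj
    | some a, some b =>
      rw [extG_degree, extG_degree]
      have h1 := hΔ a
      have h2 := hΔ b
      omega
  obtain ⟨σ, hσ⟩ := ore_cycle (extG G) (n + 1) (by rw [Fintype.card_option]) (by omega) hore
  set t0 := σ.symm none with ht0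
  refine ⟨fun v => ((σ.symm (some v)) - (t0 + 1)).val, ?_, ?_, ?_⟩
  · intro x y h
    have h1 := zval_inj h
    have h2 := sub_left_injective h1
    exact Option.some_injective _ (σ.symm.injective h2)
  · intro x y hadj
    beta_reduce
    have hxy : x ≠ y := G.ne_of_adj hadj
    have key : ∀ w1 w2 : V, G.Adj w1 w2 →
        (σ.symm (some w2) - (t0+1)).val ≠ (σ.symm (some w1) - (t0+1)).val + 1 := by
      intro w1 w2 hw hcontra
      set p := σ.symm (some w1) - (t0+1) with hp
      set q := σ.symm (some w2) - (t0+1) with hq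
      have hcast : q = p + 1 := by
        have hq1 : ((q.val : ℕ) : ZMod (n+1)) = q := ZMod.natCast_rightInverse q
        have hp1 : ((p.val : ℕ) : ZMod (n+1)) = p := ZMod.natCast_rightInverse p
        rw [← hq1, hcontra]
        push_cast [hp1]
        ring
      have h3 : σ.symm (some w2) = σ.symm (some w1) + 1 := by
        rw [hq, hp] at hcast
        linear_combination hcast
      have h4 := hσ (σ.symm (some w1))
      rw [Equiv.apply_symm_apply, ← h3, Equiv.apply_symm_apply] at h4
      exact h4.2 hw
    have k1 := key x y hadj
    have k2 := key y x hadj.symm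
    have hvne : (σ.symm (some x) - (t0+1)).val ≠ (σ.symm (some y) - (t0+1)).val := by
      intro h
      exact hxy (Option.some_injective _ (σ.symm.injective (sub_left_injective (zval_inj h))))
    omega
  · intro v
    beta_reduce
    have h1 : (σ.symm (some v) - (t0+1)).val < n + 1 := ZMod.val_lt _
    have h2 : (σ.symm (some v) - (t0+1)).val ≠ n := by
      intro h
      have h3 : σ.symm (some v) - (t0+1) = -1 := by
        apply zval_inj
        rw [h, zval_neg_one (by omega)]
        omega
      have h4 : σ.symm (some v) = t0 := by linear_combination h3
      have h5 := congrArg σ h4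
      rw [Equiv.apply_symm_apply, ht0, Equiv.apply_symm_apply] at h5
      exact Option.some_ne_none v h5
    omega

end Ext

section C4
variable {V : Type} [Fintype V] [DecidableEq V] (G : SimpleGraph V) [DecidableRel G.Adj]

lemma c4_case (hedist : ∀ u v : V, G.edist u v ≤ 2) (hcard : Fintype.card V = 4)
    (hdeg : ∀ v, G.degree v ≤ 2) :
    ∃ a : V → ℕ, Function.Injective a ∧
      (∀ x y, G.Adj x y → a x + 2 ≤ a y ∨ a y + 2 ≤ a x) ∧ ∀ v, a v ≤ 4 := by
  classical
  haveI hne : Nonempty V := Fintype.card_pos_iff.mp (by omega)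
  have hnbr : ∀ v : V, ∃ w, G.Adj v w := by
    intro v
    obtain ⟨u, hu⟩ := Fintype.exists_ne_of_one_lt_card (by omega) v
    have htop : G.edist v u ≠ ⊤ := fun h => by
      have := hedist v u; rw [h] at this; exact absurd this (by simp)
    obtain ⟨p, hp⟩ := SimpleGraph.exists_walk_of_edist_ne_top htop
    have hlen : 0 < p.length := by
      rcases Nat.eq_zero_or_pos p.length with h | h
      · exact absurd (SimpleGraph.Walk.eq_of_length_eq_zero h) (fun hh => hu hh.symm)
      · exact h
    exact ⟨p.getVert 1, by
      have := p.adj_getVert_succ (i := 0) hlen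
      rwa [SimpleGraph.Walk.getVert_zero] at this⟩
  have hdeg2 : ∀ v : V, G.degree v = 2 := by
    intro v
    by_contra hnedeg
    have hle : G.degree v ≤ 1 := by have := hdeg v; omega
    obtain ⟨w0, hw0⟩ := hnbr v
    have hvw0 : v ≠ w0 := G.ne_of_adj hw0
    have hNv : G.neighborFinset v = {w0} := by
      apply Finset.eq_singleton_iff_unique_mem.mpr
      refine ⟨(SimpleGraph.mem_neighborFinset _ _ _).mpr hw0, ?_⟩
      intro x hx
      by_contra hxw
      have hsub2 : ({x, w0} : Finset V) ⊆ G.neighborFinset v := by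
        intro y hy
        rcases Finset.mem_insert.mp hy with rfl | hy
        · exact hx
        · rw [Finset.mem_singleton] at hy; subst hy
          exact (SimpleGraph.mem_neighborFinset _ _ _).mpr hw0
      have h2le : 2 ≤ G.degree v := by
        rw [← SimpleGraph.card_neighborFinset_eq_degree]
        calc 2 = ({x, w0} : Finset V).card := (Finset.card_pair hxw).symm
          _ ≤ _ := Finset.card_le_card hsub2
      omega
    have hrest : (Finset.univ \ {v, w0} : Finset V).card = 2 := by
      rw [Finset.card_sdiff_of_subset (Finset.subset_univ _), Finset.card_univ, hcard,
        Finset.card_pair hvw0]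
    obtain ⟨x1, x2, hx12, hrest_eq⟩ := Finset.card_eq_two.mp hrest
    have hx1 : x1 ∈ (Finset.univ \ {v, w0} : Finset V) := by rw [hrest_eq]; simp
    have hx2 : x2 ∈ (Finset.univ \ {v, w0} : Finset V) := by rw [hrest_eq]; simp
    have hmid : ∀ x, x ∈ (Finset.univ \ {v, w0} : Finset V) → G.Adj w0 x := by
      intro x hx
      rw [Finset.mem_sdiff] at hx
      have hxv : x ≠ v := fun h => hx.2 (by simp [h])
      have hxw : x ≠ w0 := fun h => hx.2 (by simp [h])
      have hnadj : ¬ G.Adj v x := by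
        intro h
        have hmem : x ∈ G.neighborFinset v := (SimpleGraph.mem_neighborFinset _ _ _).mpr h
        rw [hNv, Finset.mem_singleton] at hmem
        exact hxw hmem
      have h2 : G.edist v x = 2 := edist_forced_two (fun h => hxv h.symm) hnadj (hedist v x)
      obtain ⟨w, hw1, hw2⟩ := edist_two_exists_mid h2
      have hww0 : w = w0 := by
        have hmem : w ∈ G.neighborFinset v := (SimpleGraph.mem_neighborFinset _ _ _).mpr hw1
        rw [hNv, Finset.mem_singleton] at hmem
        exact hmem
      subst hww0
      exact hw2
    have hx1v : x1 ≠ v := fun h => (Finset.mem_sdiff.mp hx1).2 (by simp [h])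
    have hx2v : x2 ≠ v := fun h => (Finset.mem_sdiff.mp hx2).2 (by simp [h])
    have hsub3 : ({v, x1, x2} : Finset V) ⊆ G.neighborFinset w0 := by
      intro y hy
      rcases Finset.mem_insert.mp hy with rfl | hy
      · exact (SimpleGraph.mem_neighborFinset _ _ _).mpr hw0.symm
      rcases Finset.mem_insert.mp hy with rfl | hy
      · exact (SimpleGraph.mem_neighborFinset _ _ _).mpr (hmid y hx1)
      · rw [Finset.mem_singleton] at hy; subst hy
        exact (SimpleGraph.mem_neighborFinset _ _ _).mpr (hmid y hx2)
    have hc3 : ({v, x1, x2} : Finset V).card = 3 := by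
      rw [Finset.card_insert_of_notMem (by simp [Ne.symm hx1v, Ne.symm hx2v]),
        Finset.card_pair hx12]
    have hfin := Finset.card_le_card hsub3
    rw [hc3, SimpleGraph.card_neighborFinset_eq_degree] at hfin
    have := hdeg w0
    omega
  obtain v0 := Classical.arbitrary V
  have hN0card : (G.neighborFinset v0).card = 2 := by
    rw [SimpleGraph.card_neighborFinset_eq_degree]; exact hdeg2 v0
  obtain ⟨v1, v3, h13, hN0⟩ := Finset.card_eq_two.mp hN0card
  have h01 : G.Adj v0 v1 := by
    have : v1 ∈ G.neighborFinset v0 := by rw [hN0]; simp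
    exact (SimpleGraph.mem_neighborFinset _ _ _).mp this
  have h03 : G.Adj v0 v3 := by
    have : v3 ∈ G.neighborFinset v0 := by rw [hN0]; simp
    exact (SimpleGraph.mem_neighborFinset _ _ _).mp this
  have h1ne0 : v1 ≠ v0 := fun h => G.irrefl (h ▸ h01)
  have h3ne0 : v3 ≠ v0 := fun h => G.irrefl (h ▸ h03)
  have hc013 : ({v0, v1, v3} : Finset V).card = 3 := by
    rw [Finset.card_insert_of_notMem (by simp [Ne.symm h1ne0, Ne.symm h3ne0]),
      Finset.card_pair h13]
  have hrest : (Finset.univ \ {v0, v1, v3} : Finset V).card = 1 := by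
    rw [Finset.card_sdiff_of_subset (Finset.subset_univ _), Finset.card_univ, hcard, hc013]
  obtain ⟨v2, h2eq⟩ := Finset.card_eq_one.mp hrest
  have hv2 : v2 ∈ (Finset.univ \ {v0, v1, v3} : Finset V) := by rw [h2eq]; simp
  have h2ne0 : v2 ≠ v0 := fun h => (Finset.mem_sdiff.mp hv2).2 (by simp [h])
  have h2ne1 : v2 ≠ v1 := fun h => (Finset.mem_sdiff.mp hv2).2 (by simp [h])
  have h2ne3 : v2 ≠ v3 := fun h => (Finset.mem_sdiff.mp hv2).2 (by simp [h])
  have hcover : ∀ x : V, x = v0 ∨ x = v1 ∨ x = v2 ∨ x = v3 := by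
    intro x
    by_cases hx0 : x = v0
    · exact Or.inl hx0
    by_cases hx1 : x = v1
    · exact Or.inr (Or.inl hx1)
    by_cases hx3 : x = v3
    · exact Or.inr (Or.inr (Or.inr hx3))
    have : x ∈ (Finset.univ \ {v0, v1, v3} : Finset V) := by
      simp [hx0, hx1, hx3]
    rw [h2eq, Finset.mem_singleton] at this
    exact Or.inr (Or.inr (Or.inl this))
  have hn02 : ¬ G.Adj v0 v2 := by
    intro h
    have hmem : v2 ∈ G.neighborFinset v0 := (SimpleGraph.mem_neighborFinset _ _ _).mpr h
    rw [hN0] at hmem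
    rcases Finset.mem_insert.mp hmem with h' | h'
    · exact h2ne1 h'
    · rw [Finset.mem_singleton] at h'; exact h2ne3 h'
  have hN2 : G.neighborFinset v2 = {v1, v3} := by
    apply Finset.eq_of_subset_of_card_le
    · intro y hy
      have hadj : G.Adj v2 y := (SimpleGraph.mem_neighborFinset _ _ _).mp hy
      have hyne2 : y ≠ v2 := fun h => G.irrefl (h ▸ hadj)
      have hyne0 : y ≠ v0 := fun h => hn02 (by rw [← h]; exact hadj.symm)
      rcases hcover y with h | h | h | h
      · exact absurd h hyne0
      · simp [h]
      · exact absurd h hyne2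
      · simp [h]
    · rw [Finset.card_pair h13, SimpleGraph.card_neighborFinset_eq_degree, hdeg2]
  have h21 : G.Adj v2 v1 := by
    have : v1 ∈ G.neighborFinset v2 := by rw [hN2]; simp
    exact (SimpleGraph.mem_neighborFinset _ _ _).mp this
  have h23 : G.Adj v2 v3 := by
    have : v3 ∈ G.neighborFinset v2 := by rw [hN2]; simp
    exact (SimpleGraph.mem_neighborFinset _ _ _).mp this
  have hn13 : ¬ G.Adj v1 v3 := by
    intro h
    have hsub : ({v0, v2, v3} : Finset V) ⊆ G.neighborFinset v1 := by
      intro y hy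
      rcases Finset.mem_insert.mp hy with rfl | hy
      · exact (SimpleGraph.mem_neighborFinset _ _ _).mpr h01.symm
      rcases Finset.mem_insert.mp hy with rfl | hy
      · exact (SimpleGraph.mem_neighborFinset _ _ _).mpr h21.symm
      · rw [Finset.mem_singleton] at hy; subst hy
        exact (SimpleGraph.mem_neighborFinset _ _ _).mpr h
    have hc : ({v0, v2, v3} : Finset V).card = 3 := by
      rw [Finset.card_insert_of_notMem (by simp [Ne.symm h2ne0, Ne.symm h3ne0]),
        Finset.card_pair h2ne3]
    have hfin := Finset.card_le_card hsub
    rw [hc, SimpleGraph.card_neighborFinset_eq_degree, hdeg2] at hfin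
    omega
  set f : V → ℕ := fun x => if x = v0 then 0 else if x = v1 then 3 else if x = v2 then 1 else 4
    with hf
  have e0 : f v0 = 0 := if_pos rfl
  have e1 : f v1 = 3 := by rw [hf]; beta_reduce; rw [if_neg h1ne0, if_pos rfl]
  have e2 : f v2 = 1 := by rw [hf]; beta_reduce; rw [if_neg h2ne0, if_neg h2ne1, if_pos rfl]
  have e3 : f v3 = 4 := by
    rw [hf]; beta_reduce
    rw [if_neg h3ne0, if_neg (Ne.symm h13), if_neg (fun h => h2ne3 h.symm)]
  refine ⟨f, ?_, ?_, ?_⟩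
  · intro x y h
    rcases hcover x with rfl | rfl | rfl | rfl <;> rcases hcover y with rfl | rfl | rfl | rfl <;>
      first
        | rfl
        | (simp only [e0, e1, e2, e3] at h; omega)
  · intro x y hadj
    rcases hcover x with rfl | rfl | rfl | rfl <;> rcases hcover y with rfl | rfl | rfl | rfl <;>
      first
        | exact absurd hadj (G.irrefl)
        | exact absurd hadj hn02
        | exact absurd hadj (fun h => hn02 h.symm)
        | exact absurd hadj hn13
        | exact absurd hadj (fun h => hn13 h.symm)
        | (simp only [e0, e1, e2, e3]; omega)
  · intro v
    rcases hcover v with rfl | rfl | rfl | rfl <;> simp only [e0, e1, e2, e3] <;> omega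

end C4


section GY
variable {V : Type} [Fintype V] [DecidableEq V] (G : SimpleGraph V) [DecidableRel G.Adj]

lemma gy_labeling (hdiam : G.ediam = 2) :
    ∃ a : V → ℕ, Function.Injective a ∧
      (∀ x y, G.Adj x y → a x + 2 ≤ a y ∨ a y + 2 ≤ a x) ∧
      ∀ v, a v ≤ G.maxDegree ^ 2 := by
  have hnontriv : Nontrivial V :=
    SimpleGraph.nontrivial_of_ediam_ne_zero (by rw [hdiam]; norm_num)
  haveI : Nonempty V := inferInstance
  set Δ := G.maxDegree with hΔdef
  have hΔ : ∀ v, G.degree v ≤ Δ := fun v => G.degree_le_maxDegree v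
  have hΔ2 : 2 ≤ Δ := maxDegree_two_le G hdiam
  have hedist : ∀ u v : V, G.edist u v ≤ 2 := fun u v => hdiam ▸ SimpleGraph.edist_le_ediam
  have hmoore : Fintype.card V ≤ Δ ^ 2 + 1 := moore_bound G hedist Δ hΔ
  by_cases h1 : Fintype.card V + Δ ≤ Δ ^ 2 + 1
  · obtain ⟨a, hinj, hgap, hbd⟩ := greedy_main G Δ hΔ
    refine ⟨a, hinj, hgap, fun v => ?_⟩
    have := hbd v
    have hpos : 1 ≤ Fintype.card V := Fintype.card_pos
    omega
  · by_cases h2 : 2 * Δ + 1 ≤ Fintype.card V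
    · obtain ⟨a, hinj, hgap, hbd⟩ := exists_gap_order G Δ hΔ (by omega) h2
      refine ⟨a, hinj, hgap, fun v => ?_⟩
      have := hbd v
      omega
    · push_neg at h1 h2
      have hkey : Δ ^ 2 + 2 ≤ 3 * Δ := by omega
      have hΔeq : Δ = 2 := by
        rcases Nat.lt_or_ge Δ 3 with h | h
        · omega
        · have h3 : 3 * Δ ≤ Δ * Δ := Nat.mul_le_mul_right Δ h
          rw [pow_two] at hkey
          omega
      have hn4 : Fintype.card V = 4 := by
        rw [hΔeq] at h1 h2
        omega
      obtain ⟨a, hinj, hgap, hbd⟩ := c4_case G hedist hn4 (by rw [← hΔeq]; exact hΔ)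
      refine ⟨a, hinj, hgap, fun v => ?_⟩
      have := hbd v
      rw [hΔeq]
      omega

end GY

end Auxiliary

open scoped Classical in
/-- If `G` is a graph of diameter 2 with maximum degree `Δ`, then `λ(M(G)) ≤ 2(Δ² + 1)`. -/
theorem lambdaNumber_mycielski_diam_two {V : Type} [Fintype V] (G : SimpleGraph V)
    (hdiam : G.ediam = 2) :
    lambdaNumber (mycielski G) ≤ 2 * (G.maxDegree ^ 2 + 1) := by
  obtain ⟨a, hinj, hgap, hbd⟩ := gy_labeling G hdiam
  set F : MycVert V → ℕ :=
    Sum.elim (fun v => 2 * a v + 1) (Sum.elim (fun v => 2 * a v + 2) (fun _ => 0)) with hF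
  have hFinj : Function.Injective F := by
    intro z w h
    rcases z with p | p | p <;> rcases w with q | q | q <;>
      simp only [hF, Sum.elim_inl, Sum.elim_inr] at h
    · exact congrArg Sum.inl (hinj (by omega))
    · exact absurd h (by omega)
    · exact absurd h (by omega)
    · exact absurd h (by omega)
    · exact congrArg (fun x => Sum.inr (Sum.inl x)) (hinj (by omega))
    · exact absurd h (by omega)
    · exact absurd h (by omega)
    · exact absurd h (by omega)
    · cases p; cases q; rfl
  have hc1 : ∀ x y, (mycielski G).Adj x y → 2 ≤ ((F x : ℤ) - (F y : ℤ)).natAbs := by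
    intro x y hxy
    rcases x with p | p | p <;> rcases y with q | q | q
    · have hadj : G.Adj p q := hxy
      have := hgap p q hadj
      simp only [hF, Sum.elim_inl]
      omega
    · have hadj : G.Adj p q := hxy
      have := hgap p q hadj
      simp only [hF, Sum.elim_inl, Sum.elim_inr]
      omega
    · exact (hxy : False).elim
    · have hadj : G.Adj p q := hxy
      have := hgap p q hadj
      simp only [hF, Sum.elim_inl, Sum.elim_inr]
      omega
    · exact (hxy : False).elim
    · simp only [hF, Sum.elim_inl, Sum.elim_inr]
      omega
    · exact (hxy : False).elim
    · simp only [hF, Sum.elim_inl, Sum.elim_inr]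
      omega
    · exact (hxy : False).elim
  have hc2 : ∀ x y, (mycielski G).dist x y = 2 → F x ≠ F y := by
    intro x y hdist
    have hxy : x ≠ y := by
      rintro rfl
      rw [SimpleGraph.dist_self] at hdist
      omega
    exact fun h => hxy (hFinj h)
  have hc3 : ∀ z, F z ≤ 2 * (G.maxDegree ^ 2 + 1) := by
    intro z
    rcases z with p | p | p <;> simp only [hF, Sum.elim_inl, Sum.elim_inr]
    · have := hbd p; omega
    · have := hbd p; omega
    · omega
  rw [lambdaNumber]
  exact Nat.sInf_le ⟨F, ⟨hc1, hc2⟩, hc3⟩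
end

section
/- If G is a graph of order n with clique number ω(G) ≤ 4, then λ(M(G)) ≤ 2n. -/
open SimpleGraph

section MycAux
open List

lemma myc_join_map_singleton {α : Type*} (l : List α) : (l.map fun v => [v]).flatten = l := by
  induction l with
  | nil => simp
  | cons a l ih => simp [ih]

lemma myc_chain'_of_true {α : Type*} {R : α → α → Prop} (hR : ∀ a b, R a b) :
    ∀ l : List α, l.IsChain R := by
  intro l
  induction l with
  | nil => simp
  | cons a l ih =>
    cases l with
    | nil => simp
    | cons b m => exact List.isChain_cons_cons.2 ⟨hR a b, ih⟩

lemma myc_junction {α : Type*} {R : α → α → Prop} {l1 l2 : List α} {x y : α}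
    (h1 : l1.getLast? = some x) (h2 : l2.head? = some y) (hR : R x y) :
    ∀ a ∈ l1.getLast?, ∀ b ∈ l2.head?, R a b := by
  intro a ha b hb
  rw [h1] at ha
  rw [h2] at hb
  simp only [Option.mem_some_iff] at ha hb
  subst ha
  subst hb
  exact hR

lemma myc_gl_map {α β : Type*} (f : α → β) {P : List α} (h : P ≠ []) :
    (P.map f).getLast? = some (f (P.getLast h)) := by
  rw [List.getLast?_map, List.getLast?_eq_getLast h]
  rfl

lemma myc_hd_map {α β : Type*} (f : α → β) {P : List α} (h : P ≠ []) :
    (P.map f).head? = some (f (P.head h)) := by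
  rw [List.head?_map, List.head?_eq_head h]
  rfl

lemma myc_hd_append {α : Type*} {l1 l2 : List α} {x : α} (h : l1.head? = some x) :
    (l1 ++ l2).head? = some x := by
  cases l1 with
  | nil => simp at h
  | cons a t => simpa using h

lemma myc_gl_cons_append {α : Type*} (x y : α) (l : List α) :
    (x :: (l ++ [y])).getLast? = some y := by
  rw [← List.cons_append]
  rw [List.getLast?_concat]

lemma myc_lambda_le_of_list {W : Type} (H : SimpleGraph W) (L : List W)
    (hmem : ∀ w, w ∈ L)
    (hch : L.IsChain (fun a b => ¬ H.Adj a b)) (k : ℕ) (hk : L.length ≤ k + 1) :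
    lambdaNumber H ≤ k := by
  classical
  have hinj : ∀ x y : W, L.idxOf x = L.idxOf y → x = y := by
    intro x y hxy
    have hx := List.idxOf_lt_length_iff.2 (hmem x)
    have hy := List.idxOf_lt_length_iff.2 (hmem y)
    have hxg := List.idxOf_get hx
    have hyg := List.idxOf_get hy
    rw [← hxg, ← hyg]
    congr 1
    exact Fin.ext hxy
  have hcons : ∀ i (h : i < L.length - 1), ¬ H.Adj (L.get ⟨i, by omega⟩) (L.get ⟨i+1, by omega⟩) :=
    fun i h => by
      have := List.isChain_iff_getElem.1 hch i (by omega)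
      exact this
  apply Nat.sInf_le
  refine ⟨fun w => L.idxOf w, ⟨?_, ?_⟩, ?_⟩
  · intro x y hadj
    simp only
    set i := L.idxOf x with hi
    set j := L.idxOf y with hj
    have hij : i ≠ j := fun e => hadj.ne (hinj x y e)
    have hx := List.idxOf_lt_length_iff.2 (hmem x)
    have hy := List.idxOf_lt_length_iff.2 (hmem y)
    by_contra hlt
    push_neg at hlt
    interval_cases hd : ((i:ℤ) - j).natAbs
    · omega
    · rcases Nat.lt_or_ge i j with hlt' | hge
      · have h1 : i < L.length - 1 := by omega
        have := hcons i h1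
        apply this
        have ex : L.get ⟨i, by omega⟩ = x := List.idxOf_get hx
        have ey : L.get ⟨i+1, by omega⟩ = y := by
          rw [show (⟨i+1, by omega⟩ : Fin L.length) = ⟨L.idxOf y, hy⟩ from
            Fin.mk_eq_mk.mpr (by omega)]
          exact List.idxOf_get hy
        rw [ex, ey]; exact hadj
      · have hji : i = j + 1 := by omega
        have h1 : j < L.length - 1 := by omega
        have := hcons j h1
        apply this
        have ey : L.get ⟨j, by omega⟩ = y := List.idxOf_get hy
        have ex : L.get ⟨j+1, by omega⟩ = x := by
          rw [show (⟨j+1, by omega⟩ : Fin L.length) = ⟨L.idxOf x, hx⟩ from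
            Fin.mk_eq_mk.mpr (by omega)]
          exact List.idxOf_get hx
        rw [ex, ey]; exact (H.adj_symm hadj)
  · intro x y hd hxy
    have := hinj x y hxy
    subst this
    simp [SimpleGraph.dist_self] at hd
  · intro w
    show L.idxOf w ≤ k
    have := List.idxOf_lt_length_iff.2 (hmem w)
    omega

lemma myc_exists_path_cover {V : Type} [Fintype V] (G : SimpleGraph V) (h : G.CliqueFree 5) :
    ∃ ps : List (List V), ps.flatten ~ (Finset.univ : Finset V).toList ∧
      (∀ p ∈ ps, p ≠ []) ∧ (∀ p ∈ ps, p.IsChain (fun a b => ¬ G.Adj a b)) ∧ ps.length ≤ 4 := by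
  classical
  set u := (Finset.univ : Finset V).toList with hu
  set Cover : List (List V) → Prop := fun ps => ps.flatten ~ u ∧
      (∀ p ∈ ps, p ≠ []) ∧ (∀ p ∈ ps, p.IsChain (fun a b => ¬ G.Adj a b)) with hCover
  have hne : ∃ k, ∃ ps, Cover ps ∧ ps.length = k := by
    refine ⟨u.length, u.map (fun v => [v]), ⟨?_, ?_, ?_⟩, by simp⟩
    · rw [myc_join_map_singleton]
    · intro p hp; simp at hp; obtain ⟨v, _, rfl⟩ := hp; simp
    · intro p hp; simp at hp; obtain ⟨v, _, rfl⟩ := hp; simp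
  set S : Set ℕ := {k | ∃ ps, Cover ps ∧ ps.length = k} with hS
  have hSne : S.Nonempty := hne
  obtain ⟨ps, hcov, hlen⟩ : ∃ ps, Cover ps ∧ ps.length = sInf S := Nat.sInf_mem hSne
  obtain ⟨hperm, hnonnil, hchain⟩ := hcov
  have hjnd : ps.flatten.Nodup := (Finset.nodup_toList _).perm hperm.symm
  have hdisj : ps.Pairwise List.Disjoint := (List.nodup_flatten.1 hjnd).2
  set R' : List V → List V → Prop := fun p q => ∀ x ∈ p.getLast?, ∀ y ∈ q.getLast?, G.Adj x y
    with hR'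
  by_cases hpw : ps.Pairwise R'
  · refine ⟨ps, hperm, hnonnil, hchain, ?_⟩
    by_contra hlong
    push_neg at hlong
    have h5 : 5 ≤ ps.length := hlong
    set c : Fin ps.length → V := fun i => (ps.get i).getLast (hnonnil _ (ps.get_mem _)) with hc
    have hclast : ∀ i, (ps.get i).getLast? = some (c i) := fun i =>
      List.getLast?_eq_getLast _
    have hadjc : ∀ i j : Fin ps.length, i < j → G.Adj (c i) (c j) := by
      intro i j hij
      have := (List.pairwise_iff_get.1 hpw) i j hij
      exact this (c i) (by rw [hclast i]; rfl) (c j) (by rw [hclast j]; rfl)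
    have hcmem : ∀ i, c i ∈ ps.get i := fun i => List.getLast_mem _
    have hcinj : Function.Injective c := by
      intro i j hij
      by_contra hne'
      rcases Ne.lt_or_gt (Fin.val_ne_of_ne hne') with hlt | hlt
      · have hd := (List.pairwise_iff_get.1 hdisj) ⟨i, i.isLt⟩ ⟨j, j.isLt⟩ hlt
        exact hd (by simpa using hcmem i) (by rw [hij]; simpa using hcmem j)
      · have hd := (List.pairwise_iff_get.1 hdisj) ⟨j, j.isLt⟩ ⟨i, i.isLt⟩ hlt
        exact hd (by simpa using hcmem j) (by rw [← hij]; simpa using hcmem i)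
    have hadjc' : ∀ i j : Fin ps.length, i ≠ j → G.Adj (c i) (c j) := by
      intro i j hij
      rcases Ne.lt_or_gt hij with hlt | hlt
      · exact hadjc i j hlt
      · exact (hadjc j i hlt).symm
    set e : Fin 5 → V := fun i => c ⟨i, by omega⟩ with he
    have heinj : Function.Injective e := by
      intro a b hab
      have := hcinj hab
      simpa [Fin.ext_iff] using congrArg Fin.val this
    apply h (Finset.univ.image e)
    constructor
    · rintro x hx y hy hxy
      simp only [Finset.coe_image, Set.mem_image] at hx hy
      obtain ⟨a, _, rfl⟩ := hx
      obtain ⟨b, _, rfl⟩ := hy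
      refine hadjc' _ _ ?_
      intro hcc
      apply hxy
      have hval : (a : ℕ) = (b : ℕ) := Fin.mk_eq_mk.mp hcc
      have hab : a = b := Fin.ext hval
      rw [hab]
    · rw [Finset.card_image_of_injective _ heinj]; simp
  · exfalso
    rw [List.pairwise_iff_get] at hpw
    push_neg at hpw
    obtain ⟨i, j, hij, hnadj⟩ := hpw
    set p := ps.get i with hp
    set q := ps.get j with hq
    have hpne : p ≠ [] := hnonnil _ (ps.get_mem _)
    have hqne : q ≠ [] := hnonnil _ (ps.get_mem _)
    have hnadj' : ¬ G.Adj (p.getLast hpne) (q.getLast hqne) := by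
      intro hadj
      apply hnadj
      intro x hx y hy
      rw [List.getLast?_eq_getLast hpne] at hx
      rw [List.getLast?_eq_getLast hqne] at hy
      simp at hx hy
      rw [← hx, ← hy]; exact hadj
    have hpq : p ≠ q := by
      intro hpq
      have hd := (List.pairwise_iff_get.1 hdisj) i j hij
      rw [← hp, ← hq] at hd
      exact hd (List.getLast_mem hpne) (hpq ▸ List.getLast_mem hpne)
    have hpmem : p ∈ ps := ps.get_mem _
    obtain ⟨l1, hperm1⟩ : ∃ l1, ps ~ p :: l1 := ⟨_, List.perm_cons_erase hpmem⟩
    have hqmem : q ∈ l1 := by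
      have : q ∈ p :: l1 := hperm1.mem_iff.1 (ps.get_mem _)
      rcases List.mem_cons.1 this with hh | hh
      · exact absurd hh.symm hpq
      · exact hh
    obtain ⟨rest, hperm2⟩ : ∃ r, l1 ~ q :: r := ⟨_, List.perm_cons_erase hqmem⟩
    have hps2 : ps ~ p :: q :: rest := hperm1.trans (hperm2.cons p)
    set ps' := (p ++ q.reverse) :: rest with hps'
    have hrsub : ∀ r ∈ rest, r ∈ ps := by
      intro r hr
      have := (hps2.mem_iff (a := r)).2 (by simp [hr])
      exact this
    have hcov' : Cover ps' := by
      refine ⟨?_, ?_, ?_⟩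
      · have : ps'.flatten ~ ps.flatten := by
          calc ps'.flatten = (p ++ q.reverse) ++ rest.flatten := by simp [hps']
          _ ~ (p ++ q) ++ rest.flatten := by
              exact ((q.reverse_perm.append_left p).append_right _)
          _ ~ ps.flatten := by
              have := hps2.flatten
              simpa using this.symm
        exact this.trans hperm
      · rintro r hr
        rcases List.mem_cons.1 hr with rfl | hr
        · simp [hpne]
        · exact hnonnil _ (hrsub _ hr)
      · rintro r hr
        rcases List.mem_cons.1 hr with rfl | hr
        · apply List.IsChain.append (hchain _ hpmem)
          · rw [List.isChain_reverse]
            have := hchain q (ps.get_mem _)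
            exact this.imp (by intro a b hab; intro hadj; exact hab hadj.symm)
          · intro x hx y hy
            rw [List.getLast?_eq_getLast hpne] at hx
            rw [List.head?_reverse, List.getLast?_eq_getLast hqne] at hy
            simp at hx hy
            rw [← hx, ← hy]; exact hnadj'
        · exact hchain _ (hrsub _ hr)
    have hlt : ps'.length < ps.length := by
      have := hps2.length_eq
      simp [hps'] at this ⊢
      omega
    have : sInf S ≤ ps'.length := Nat.sInf_le ⟨ps', hcov', rfl⟩
    omega

end MycAux
open List

/-- If `G` is a graph of order `n` with clique number `ω(G) ≤ 4` (i.e. no 5-clique), then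
`λ(M(G)) ≤ 2n`. -/
theorem lambdaNumber_mycielski_of_cliqueFree {V : Type} [Fintype V] (G : SimpleGraph V)
    (n : ℕ) (hn : Fintype.card V = n) (h : G.CliqueFree 5) :
    lambdaNumber (mycielski G) ≤ 2 * n := by
  classical
  obtain ⟨ps, hperm, hnonnil, hchain, hlen4⟩ := myc_exists_path_cover G h
  set u := (Finset.univ : Finset V).toList with hu
  set o : V → MycVert V := Sum.inl with ho
  set cp : V → MycVert V := fun v => Sum.inr (Sum.inl v) with hcp
  set rt : MycVert V := Sum.inr (Sum.inr ()) with hrt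
  set RM : MycVert V → MycVert V → Prop := fun a b => ¬ (mycielski G).Adj a b with hRM
  have hRoo : ∀ v w : V, ¬ G.Adj v w → RM (o v) (o w) := fun v w hvw => hvw
  have hRocSelf : ∀ v : V, RM (o v) (cp v) := fun v hadj => G.irrefl hadj
  have hRcoSelf : ∀ v : V, RM (cp v) (o v) := fun v hadj => G.irrefl hadj
  have hRcc : ∀ v w : V, RM (cp v) (cp w) := fun v w hadj => hadj
  have hRro : ∀ v : V, RM rt (o v) := fun v hadj => hadj
  have hRor : ∀ v : V, RM (o v) rt := fun v hadj => hadj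
  have hund : u.Nodup := Finset.nodup_toList _
  have humem : ∀ v : V, v ∈ u := fun v => by simp [hu]
  have hulen : u.length = n := by rw [hu, Finset.length_toList, Finset.card_univ, hn]
  set M : List (MycVert V) := (u.map o) ++ ((u.map cp) ++ [rt]) with hM
  have hMnd : M.Nodup := by
    rw [hM]
    refine (List.nodup_append).2 ⟨hund.map (fun a b hab => Sum.inl.inj hab), ?_, ?_⟩
    · refine (List.nodup_append).2 ⟨?_, by simp, ?_⟩
      · exact hund.map (fun a b hab => by simpa [hcp] using hab)
      · intro x hx
        simp only [List.mem_map] at hx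
        obtain ⟨v, _, rfl⟩ := hx
        simp [hcp, hrt]
    · intro x hx
      simp only [List.mem_map] at hx
      obtain ⟨v, _, rfl⟩ := hx
      simp [ho, hcp, hrt]
  have hMmem : ∀ w : MycVert V, w ∈ M := by
    rintro (v | v | uu)
    · rw [hM]
      exact List.mem_append_left _ (List.mem_map.2 ⟨v, humem v, rfl⟩)
    · rw [hM]
      exact List.mem_append_right _ (List.mem_append_left _ (List.mem_map.2 ⟨v, humem v, rfl⟩))
    · rw [hM]
      rcases uu
      exact List.mem_append_right _ (List.mem_append_right _ (by simp [hrt]))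
  have hMlen : M.length = 2 * n + 1 := by
    rw [hM]
    simp [hulen]
    omega
  suffices hL : ∃ L : List (MycVert V), L ~ M ∧ L.IsChain RM by
    obtain ⟨L, hLM, hLch⟩ := hL
    exact myc_lambda_le_of_list (mycielski G) L (fun w => hLM.mem_iff.2 (hMmem w)) hLch (2 * n)
      (by rw [hLM.length_eq, hMlen])
  have hund2 : ps.flatten.Nodup := hund.perm hperm.symm
  rcases ps with _ | ⟨P1, _ | ⟨P2, _ | ⟨P3, _ | ⟨P4, _ | ⟨P5, t⟩⟩⟩⟩⟩
  · -- 0 paths : V is empty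
    have hu0 : u = [] := List.Perm.eq_nil (by simpa using hperm.symm)
    refine ⟨[rt], ?_, by simp⟩
    rw [hM, hu0]
    simp
  · -- 1 path
    have hP1ne : P1 ≠ [] := hnonnil P1 (by simp)
    simp only [List.flatten_cons, List.flatten_nil, List.append_nil] at hperm
    set a1 := P1.getLast hP1ne with ha1
    set cl : List V := a1 :: u.erase a1 with hcl
    have hclu : cl ~ u := (List.perm_cons_erase (humem a1)).symm
    refine ⟨[rt] ++ ((P1.map o) ++ (cl.map cp)), ?_, ?_⟩
    · rw [← Multiset.coe_eq_coe]
      have e1 : (↑(P1.map o) : Multiset (MycVert V)) = ↑(u.map o) :=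
        Multiset.coe_eq_coe.2 (hperm.map o)
      have e2 : (↑(cl.map cp) : Multiset (MycVert V)) = ↑(u.map cp) :=
        Multiset.coe_eq_coe.2 (hclu.map cp)
      simp only [hM, ← Multiset.coe_add]
      rw [e1, e2]
      abel
    · refine List.IsChain.append (by simp) ?_ ?_
      · refine List.IsChain.append ?_ ?_ ?_
        · exact (List.isChain_map o).2 ((hchain P1 (by simp)).imp (fun a b hab => hRoo a b hab))
        · exact (List.isChain_map cp).2 (myc_chain'_of_true (fun a b => hRcc a b) cl)
        · exact myc_junction (myc_gl_map o hP1ne) (myc_hd_map cp (by simp [hcl])) (by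
            simpa [hcl] using hRocSelf a1)
      · exact myc_junction rfl (myc_hd_append (myc_hd_map o hP1ne)) (hRro _)
  · -- 2 paths
    have hP1ne : P1 ≠ [] := hnonnil P1 (by simp)
    have hP2ne : P2 ≠ [] := hnonnil P2 (by simp)
    simp only [List.flatten_cons, List.flatten_nil, List.append_nil] at hperm hund2
    set a1 := P1.getLast hP1ne with ha1
    set b2 := P2.head hP2ne with hb2
    have hdj12 : P1.Disjoint P2 := (List.nodup_append'.1 hund2).2.2
    have hab : b2 ≠ a1 := by
      intro e
      have hm : b2 ∈ P2 := P2.head_mem hP2ne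
      rw [e] at hm
      exact hdj12 (P1.getLast_mem hP1ne) hm
    set mid := (u.erase a1).erase b2 with hmid
    set cl : List V := a1 :: (mid ++ [b2]) with hcl
    have hclu : cl ~ u := by
      have h1 : u ~ a1 :: u.erase a1 := List.perm_cons_erase (humem a1)
      have hb2mem : b2 ∈ u.erase a1 := (List.mem_erase_of_ne hab).2 (humem b2)
      have h2 : u.erase a1 ~ b2 :: mid := List.perm_cons_erase hb2mem
      calc cl ~ a1 :: (b2 :: mid) := (List.perm_append_singleton b2 mid).cons a1
      _ ~ a1 :: u.erase a1 := (h2.symm).cons a1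
      _ ~ u := h1.symm
    refine ⟨[rt] ++ ((P1.map o) ++ ((cl.map cp) ++ (P2.map o))), ?_, ?_⟩
    · rw [← Multiset.coe_eq_coe]
      have e1 : (↑(P1.map o) : Multiset (MycVert V)) + ↑(P2.map o) = ↑(u.map o) := by
        have := Multiset.coe_eq_coe.2 (hperm.map o)
        simp only [List.map_append, ← Multiset.coe_add] at this
        exact this
      have e2 : (↑(cl.map cp) : Multiset (MycVert V)) = ↑(u.map cp) :=
        Multiset.coe_eq_coe.2 (hclu.map cp)
      simp only [hM, ← Multiset.coe_add]
      rw [e2, ← e1]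
      abel
    · have glcl : (cl.map cp).getLast? = some (cp b2) := by
        rw [hcl]
        simp only [List.map_cons, List.map_append, List.map_nil]
        exact myc_gl_cons_append _ _ _
      refine List.IsChain.append (by simp) ?_ ?_
      · refine List.IsChain.append ?_ ?_ ?_
        · exact (List.isChain_map o).2 ((hchain P1 (by simp)).imp (fun a b hab => hRoo a b hab))
        · refine List.IsChain.append ?_ ?_ ?_
          · exact (List.isChain_map cp).2 (myc_chain'_of_true (fun a b => hRcc a b) cl)
          · exact (List.isChain_map o).2 ((hchain P2 (by simp)).imp (fun a b hab => hRoo a b hab))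
          · exact myc_junction glcl (myc_hd_map o hP2ne) (hRcoSelf b2)
        · exact myc_junction (myc_gl_map o hP1ne)
            (myc_hd_append (myc_hd_map cp (by simp [hcl]))) (by simpa [hcl] using hRocSelf a1)
      · exact myc_junction rfl (myc_hd_append (myc_hd_map o hP1ne)) (hRro _)
  · -- 3 paths
    have hP1ne : P1 ≠ [] := hnonnil P1 (by simp)
    have hP2ne : P2 ≠ [] := hnonnil P2 (by simp)
    have hP3ne : P3 ≠ [] := hnonnil P3 (by simp)
    simp only [List.flatten_cons, List.flatten_nil, List.append_nil] at hperm hund2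
    set a1 := P1.getLast hP1ne with ha1
    set b2 := P2.head hP2ne with hb2
    have hdj12 : P1.Disjoint P2 := by
      intro x hx1 hx2
      rw [← List.append_assoc] at hund2
      exact (List.nodup_append'.1 ((List.nodup_append'.1 hund2).1)).2.2 hx1 hx2
    have hab : b2 ≠ a1 := by
      intro e
      have hm : b2 ∈ P2 := P2.head_mem hP2ne
      rw [e] at hm
      exact hdj12 (P1.getLast_mem hP1ne) hm
    set mid := (u.erase a1).erase b2 with hmid
    set cl : List V := a1 :: (mid ++ [b2]) with hcl
    have hclu : cl ~ u := by
      have h1 : u ~ a1 :: u.erase a1 := List.perm_cons_erase (humem a1)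
      have hb2mem : b2 ∈ u.erase a1 := (List.mem_erase_of_ne hab).2 (humem b2)
      have h2 : u.erase a1 ~ b2 :: mid := List.perm_cons_erase hb2mem
      calc cl ~ a1 :: (b2 :: mid) := (List.perm_append_singleton b2 mid).cons a1
      _ ~ a1 :: u.erase a1 := (h2.symm).cons a1
      _ ~ u := h1.symm
    refine ⟨(P1.map o) ++ ((cl.map cp) ++ ((P2.map o) ++ ([rt] ++ (P3.map o)))), ?_, ?_⟩
    · rw [← Multiset.coe_eq_coe]
      have e1 : (↑(P1.map o) : Multiset (MycVert V)) + (↑(P2.map o) + ↑(P3.map o)) =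
          ↑(u.map o) := by
        have := Multiset.coe_eq_coe.2 (hperm.map o)
        simp only [List.map_append, ← Multiset.coe_add] at this
        rw [← this]
        try abel
      have e2 : (↑(cl.map cp) : Multiset (MycVert V)) = ↑(u.map cp) :=
        Multiset.coe_eq_coe.2 (hclu.map cp)
      simp only [hM, ← Multiset.coe_add]
      rw [e2, ← e1]
      abel
    · have glcl : (cl.map cp).getLast? = some (cp b2) := by
        rw [hcl]
        simp only [List.map_cons, List.map_append, List.map_nil]
        exact myc_gl_cons_append _ _ _
      refine List.IsChain.append ?_ ?_ ?_
      · exact (List.isChain_map o).2 ((hchain P1 (by simp)).imp (fun a b hab => hRoo a b hab))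
      · refine List.IsChain.append ?_ ?_ ?_
        · exact (List.isChain_map cp).2 (myc_chain'_of_true (fun a b => hRcc a b) cl)
        · refine List.IsChain.append ?_ ?_ ?_
          · exact (List.isChain_map o).2 ((hchain P2 (by simp)).imp (fun a b hab => hRoo a b hab))
          · refine List.IsChain.append (by simp) ?_ ?_
            · exact (List.isChain_map o).2 ((hchain P3 (by simp)).imp (fun a b hab => hRoo a b hab))
            · exact myc_junction rfl (myc_hd_map o hP3ne) (hRro _)
          · exact myc_junction (myc_gl_map o hP2ne) rfl (hRor _)
        · exact myc_junction glcl (myc_hd_append (myc_hd_map o hP2ne)) (hRcoSelf b2)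
      · exact myc_junction (myc_gl_map o hP1ne)
          (myc_hd_append (myc_hd_map cp (by simp [hcl]))) (by simpa [hcl] using hRocSelf a1)
  · -- 4 paths
    have hP1ne : P1 ≠ [] := hnonnil P1 (by simp)
    have hP2ne : P2 ≠ [] := hnonnil P2 (by simp)
    have hP3ne : P3 ≠ [] := hnonnil P3 (by simp)
    have hP4ne : P4 ≠ [] := hnonnil P4 (by simp)
    simp only [List.flatten_cons, List.flatten_nil, List.append_nil] at hperm hund2
    set a1 := P1.getLast hP1ne with ha1
    set b2 := P2.head hP2ne with hb2
    set e3 := P3.getLast hP3ne with he3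
    set d4 := P4.head hP4ne with hd4
    have ha1m : a1 ∈ P1 := P1.getLast_mem hP1ne
    have hb2m : b2 ∈ P2 := P2.head_mem hP2ne
    have he3m : e3 ∈ P3 := P3.getLast_mem hP3ne
    have hd4m : d4 ∈ P4 := P4.head_mem hP4ne
    -- disjointness of the four paths
    have hnd' : (P1 ++ P2 ++ P3 ++ P4).Nodup := by
      simpa [List.append_assoc] using hund2
    have hdj : ∀ x, (x ∈ P1 → x ∉ P2 ∧ x ∉ P3 ∧ x ∉ P4) ∧ (x ∈ P2 → x ∉ P3 ∧ x ∉ P4) ∧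
        (x ∈ P3 → x ∉ P4) := by
      intro x
      have h1 := List.nodup_append'.1 hnd'
      have h2 := List.nodup_append'.1 h1.1
      have h3 := List.nodup_append'.1 h2.1
      refine ⟨fun hx => ⟨fun hx' => h3.2.2 hx hx', fun hx' => h2.2.2 (by simp [hx]) hx',
        fun hx' => h1.2.2 (by simp [hx]) hx'⟩,
        fun hx => ⟨fun hx' => h2.2.2 (by simp [hx]) hx', fun hx' => h1.2.2 (by simp [hx]) hx'⟩,
        fun hx => fun hx' => h1.2.2 (by simp [hx]) hx'⟩
    have hab : b2 ≠ a1 := by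
      intro e; have hm := hb2m; rw [e] at hm; exact ((hdj a1).1 ha1m).1 hm
    have hae : e3 ≠ a1 := by
      intro e; have hm := he3m; rw [e] at hm; exact ((hdj a1).1 ha1m).2.1 hm
    have had : d4 ≠ a1 := by
      intro e; have hm := hd4m; rw [e] at hm; exact ((hdj a1).1 ha1m).2.2 hm
    have hbe : e3 ≠ b2 := by
      intro e; have hm := he3m; rw [e] at hm; exact ((hdj b2).2.1 hb2m).1 hm
    have hbd : d4 ≠ b2 := by
      intro e; have hm := hd4m; rw [e] at hm; exact ((hdj b2).2.1 hb2m).2 hm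
    have hed : d4 ≠ e3 := by
      intro e; have hm := hd4m; rw [e] at hm; exact ((hdj e3).2.2 he3m) hm
    set mid := ((((u.erase a1).erase b2).erase e3).erase d4) with hmid
    set cl : List V := a1 :: (mid ++ [b2]) with hcl
    have hclu : cl ++ [e3, d4] ~ u := by
      have h1 : u ~ a1 :: u.erase a1 := List.perm_cons_erase (humem a1)
      have hb2mem : b2 ∈ u.erase a1 := (List.mem_erase_of_ne hab).2 (humem b2)
      have h2 : u.erase a1 ~ b2 :: (u.erase a1).erase b2 := List.perm_cons_erase hb2mem
      have he3mem : e3 ∈ (u.erase a1).erase b2 :=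
        (List.mem_erase_of_ne hbe).2 ((List.mem_erase_of_ne hae).2 (humem e3))
      have h3 : (u.erase a1).erase b2 ~ e3 :: ((u.erase a1).erase b2).erase e3 :=
        List.perm_cons_erase he3mem
      have hd4mem : d4 ∈ ((u.erase a1).erase b2).erase e3 :=
        (List.mem_erase_of_ne hed).2 ((List.mem_erase_of_ne hbd).2
          ((List.mem_erase_of_ne had).2 (humem d4)))
      have h4 : ((u.erase a1).erase b2).erase e3 ~ d4 :: mid := List.perm_cons_erase hd4mem
      have hfull : u ~ a1 :: (b2 :: (e3 :: (d4 :: mid))) :=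
        h1.trans ((h2.trans ((h3.trans (h4.cons e3)).cons b2)).cons a1)
      rw [← Multiset.coe_eq_coe] at hfull ⊢
      simp only [hcl, List.cons_append, ← Multiset.coe_add, ← Multiset.cons_coe,
        ← Multiset.singleton_add] at hfull ⊢
      rw [hfull]
      abel
    refine ⟨(P1.map o) ++ ((cl.map cp) ++ ((P2.map o) ++ ([rt] ++ ((P3.map o) ++
      ([cp e3, cp d4] ++ (P4.map o)))))), ?_, ?_⟩
    · rw [← Multiset.coe_eq_coe]
      have e1 : (↑(P1.map o) : Multiset (MycVert V)) + (↑(P2.map o) + (↑(P3.map o) +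
          ↑(P4.map o))) = ↑(u.map o) := by
        have := Multiset.coe_eq_coe.2 (hperm.map o)
        simp only [List.map_append, ← Multiset.coe_add] at this
        rw [← this]
        try abel
      have e2 : (↑(cl.map cp) : Multiset (MycVert V)) + ↑([cp e3, cp d4]) = ↑(u.map cp) := by
        have := Multiset.coe_eq_coe.2 (hclu.map cp)
        simp only [List.map_append, ← Multiset.coe_add] at this
        rw [← this]
        simp [hcp]
      simp only [hM, ← Multiset.coe_add]
      rw [← e2, ← e1]
      abel
    · have glcl : (cl.map cp).getLast? = some (cp b2) := by
        rw [hcl]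
        simp only [List.map_cons, List.map_append, List.map_nil]
        exact myc_gl_cons_append _ _ _
      refine List.IsChain.append ?_ ?_ ?_
      · exact (List.isChain_map o).2 ((hchain P1 (by simp)).imp (fun a b hab => hRoo a b hab))
      · refine List.IsChain.append ?_ ?_ ?_
        · exact (List.isChain_map cp).2 (myc_chain'_of_true (fun a b => hRcc a b) cl)
        · refine List.IsChain.append ?_ ?_ ?_
          · exact (List.isChain_map o).2 ((hchain P2 (by simp)).imp (fun a b hab => hRoo a b hab))
          · refine List.IsChain.append (by simp) ?_ ?_
            · refine List.IsChain.append ?_ ?_ ?_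
              · exact (List.isChain_map o).2
                  ((hchain P3 (by simp)).imp (fun a b hab => hRoo a b hab))
              · refine List.IsChain.append ?_ ?_ ?_
                · exact List.isChain_pair.2 (hRcc e3 d4)
                · exact (List.isChain_map o).2
                    ((hchain P4 (by simp)).imp (fun a b hab => hRoo a b hab))
                · exact myc_junction rfl (myc_hd_map o hP4ne) (hRcoSelf d4)
              · exact myc_junction (myc_gl_map o hP3ne) rfl (hRocSelf e3)
            · exact myc_junction rfl (myc_hd_append (myc_hd_map o hP3ne)) (hRro _)
          · exact myc_junction (myc_gl_map o hP2ne) rfl (hRor _)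
        · exact myc_junction glcl (myc_hd_append (myc_hd_map o hP2ne)) (hRcoSelf b2)
      · exact myc_junction (myc_gl_map o hP1ne)
          (myc_hd_append (myc_hd_map cp (by simp [hcl]))) (by simpa [hcl] using hRocSelf a1)
  · -- ≥ 5 paths : impossible
    exfalso
    simp at hlen4; omega
end

section
/- For the path P_n, the Mycielski graph satisfies λ(M(P_n)) = 6 for n ∈ {3,4}, λ(M(P_5)) = 7, and λ(M(P_n)) = n + 1 for all n ≥ 6. -/
open SimpleGraph

-- ### helpers

lemma dist_eq_two_of {V : Type} (G : SimpleGraph V) {x w y : V}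
    (h1 : G.Adj x w) (h2 : G.Adj w y) (hxy : x ≠ y) (hna : ¬ G.Adj x y) :
    G.dist x y = 2 := by
  have hw : G.Walk x y := (h1.toWalk.append h2.toWalk)
  have hle : G.dist x y ≤ 2 := by
    have := SimpleGraph.dist_le (h1.toWalk.append h2.toWalk)
    simpa using this
  have h0 : G.dist x y ≠ 0 := by
    intro h0
    rcases SimpleGraph.dist_eq_zero_iff_eq_or_not_reachable.mp h0 with h | h
    · exact hxy h
    · exact h ⟨hw⟩
  have h1' : G.dist x y ≠ 1 := fun h => hna (SimpleGraph.dist_eq_one_iff_adj.mp h)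
  omega

lemma common_of_dist_eq_two {V : Type} {G : SimpleGraph V} {x y : V}
    (h : G.dist x y = 2) : x ≠ y ∧ ∃ w, G.Adj x w ∧ G.Adj w y := by
  have h0 : G.dist x y ≠ 0 := by omega
  obtain ⟨p, hp⟩ := SimpleGraph.exists_walk_of_dist_ne_zero h0
  rw [h] at hp
  constructor
  · intro he; subst he; simp [SimpleGraph.dist_self] at h
  · match p, hp with
    | SimpleGraph.Walk.cons h1 q, hp =>
      match q, (by simpa using hp : q.length = 1) with
      | SimpleGraph.Walk.cons h2 q', hq =>
        match q', (by simpa using hq : q'.length = 0) with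
        | SimpleGraph.Walk.nil, _ => exact ⟨_, h1, h2⟩

-- pigeonhole: a list of pairwise-distinct nats inside [lo, lo+w) has length ≤ w
lemma pigeon_list (l : List ℕ) (lo w : ℕ) (hp : l.Pairwise (· ≠ ·))
    (hin : ∀ x ∈ l, lo ≤ x ∧ x < lo + w) : l.length ≤ w := by
  have hnd : l.Nodup := hp
  have h1 : l.toFinset.card = l.length := List.toFinset_card_of_nodup hnd
  have h2 : l.toFinset ⊆ Finset.Ico lo (lo + w) := by
    intro x hx
    rw [List.mem_toFinset] at hx
    rcases hin x hx with ⟨h3, h4⟩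
    simp [Finset.mem_Ico]; omega
  have := Finset.card_le_card h2
  rw [h1, Nat.card_Ico] at this
  omega

lemma pigeonFun {m w : ℕ} (lo : ℕ) (x : Fin m → ℕ) (hinj : Function.Injective x)
    (hb : ∀ i, lo ≤ x i ∧ x i < lo + w) (hmw : w < m) : False := by
  have h1 : (Finset.univ : Finset (Fin m)).card ≤ (Finset.Ico lo (lo+w)).card :=
    Finset.card_le_card_of_injOn x
      (fun i _ => by simpa [Finset.mem_Ico] using hb i) hinj.injOn
  simp [Nat.card_Ico] at h1; omega

-- ### mycielski path specific lemmas
abbrev MP (n : ℕ) := mycielski (SimpleGraph.pathGraph n)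

namespace MPl

variable {n : ℕ}

lemma adj_vv {i j : Fin n} : (MP n).Adj (.inl i) (.inl j) ↔ ((i:ℕ)+1 = j ∨ (j:ℕ)+1 = i) :=
  SimpleGraph.pathGraph_adj

lemma adj_vu {i j : Fin n} : (MP n).Adj (.inl i) (.inr (.inl j)) ↔ ((i:ℕ)+1 = j ∨ (j:ℕ)+1 = i) :=
  SimpleGraph.pathGraph_adj

lemma adj_uv {i j : Fin n} : (MP n).Adj (.inr (.inl i)) (.inl j) ↔ ((i:ℕ)+1 = j ∨ (j:ℕ)+1 = i) :=
  SimpleGraph.pathGraph_adj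

lemma adj_uz {i : Fin n} : (MP n).Adj (.inr (.inl i)) (.inr (.inr ())) := trivial

lemma adj_zu {i : Fin n} : (MP n).Adj (.inr (.inr ())) (.inr (.inl i)) := trivial

lemma dUU (i j : Fin n) (hij : i ≠ j) :
    (MP n).dist (.inr (.inl i)) (.inr (.inl j)) = 2 :=
  dist_eq_two_of _ (w := .inr (.inr ())) adj_uz adj_zu (by simp [hij]) (fun h => h)

lemma dVZ (i : Fin n) (hn : 2 ≤ n) :
    (MP n).dist (.inl i) (.inr (.inr ())) = 2 := by
  by_cases h : (i : ℕ) + 1 < n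
  · exact dist_eq_two_of _ (w := .inr (.inl ⟨(i:ℕ)+1, h⟩))
      (adj_vu.mpr (Or.inl rfl)) adj_uz (by simp) (fun h => h)
  · have h2 : 1 ≤ (i : ℕ) := by have := i.isLt; omega
    exact dist_eq_two_of _ (w := .inr (.inl ⟨(i:ℕ)-1, by omega⟩))
      (adj_vu.mpr (Or.inr (by simp; omega))) adj_uz (by simp) (fun h => h)

lemma dVU0 (i : Fin n) (hn : 2 ≤ n) :
    (MP n).dist (.inl i) (.inr (.inl i)) = 2 := by
  have hna : ¬ (MP n).Adj (.inl i) (.inr (.inl i)) := by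
    rw [adj_vu]; omega
  by_cases h : (i : ℕ) + 1 < n
  · exact dist_eq_two_of _ (w := .inl ⟨(i:ℕ)+1, h⟩)
      (adj_vv.mpr (Or.inl rfl)) (adj_vu.mpr (Or.inr rfl)) (by simp) hna
  · have h2 : 1 ≤ (i : ℕ) := by have := i.isLt; omega
    exact dist_eq_two_of _ (w := .inl ⟨(i:ℕ)-1, by omega⟩)
      (adj_vv.mpr (Or.inr (by simp; omega))) (adj_vu.mpr (Or.inl (by simp; omega)))
      (by simp [Fin.ext_iff] <;> omega) hna

lemma dVV2 (i : ℕ) (h : i + 2 < n) :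
    (MP n).dist (.inl ⟨i, by omega⟩) (.inl ⟨i+2, by omega⟩) = 2 :=
  dist_eq_two_of _ (w := .inl ⟨i+1, by omega⟩)
    (adj_vv.mpr (Or.inl rfl)) (adj_vv.mpr (Or.inl rfl))
    (by simp [Fin.ext_iff]) (by rw [adj_vv]; simp; omega)

lemma dVU2 (i : ℕ) (h : i + 2 < n) :
    (MP n).dist (.inl ⟨i, by omega⟩) (.inr (.inl ⟨i+2, by omega⟩)) = 2 :=
  dist_eq_two_of _ (w := .inl ⟨i+1, by omega⟩)
    (adj_vv.mpr (Or.inl rfl)) (adj_vu.mpr (Or.inl rfl))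
    (by simp) (by rw [adj_vu]; simp; omega)

lemma dUV2 (i : ℕ) (h : i + 2 < n) :
    (MP n).dist (.inr (.inl ⟨i, by omega⟩)) (.inl ⟨i+2, by omega⟩) = 2 :=
  dist_eq_two_of _ (w := .inl ⟨i+1, by omega⟩)
    (adj_uv.mpr (Or.inl rfl)) (adj_vv.mpr (Or.inl rfl))
    (by simp) (by rw [adj_uv]; simp; omega)

end MPl
namespace MPl

def lab (g h : ℕ → ℕ) (c : ℕ) : MycVert (Fin n) → ℕ
  | .inl i => g i
  | .inr (.inl i) => h i
  | .inr (.inr _) => c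

lemma builder (n : ℕ) (g h : ℕ → ℕ) (c : ℕ)
    (A1 : ∀ i, i+1 < n → 2 ≤ ((g i : ℤ) - g (i+1)).natAbs)
    (A2 : ∀ i, i+1 < n → 2 ≤ ((g i : ℤ) - h (i+1)).natAbs)
    (A3 : ∀ i, i+1 < n → 2 ≤ ((g (i+1) : ℤ) - h i).natAbs)
    (B : ∀ i, i < n → 2 ≤ ((h i : ℤ) - c).natAbs)
    (C : ∀ i j, i < n → j < n → i ≠ j → h i ≠ h j)
    (D1 : ∀ i, i+2 < n → g i ≠ g (i+2))
    (D2 : ∀ i, i+2 < n → g i ≠ h (i+2))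
    (D3 : ∀ i, i+2 < n → g (i+2) ≠ h i)
    (E1 : ∀ i, i < n → g i ≠ h i)
    (E2 : ∀ i, i < n → g i ≠ c) :
    IsL21Labeling (MP n) (lab g h c) := by
  constructor
  · rintro (i | i | x0) (j | j | y0) hadj
    · rcases adj_vv.mp hadj with hh | hh
      · have := A1 i (hh ▸ j.isLt); rw [hh] at this; exact this
      · have := A1 j (hh ▸ i.isLt); rw [hh] at this; simp only [lab]; omega
    · rcases adj_vu.mp hadj with hh | hh
      · have := A2 i (hh ▸ j.isLt); rw [hh] at this; exact this
      · have := A3 j (hh ▸ i.isLt); rw [hh] at this; exact this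
    · exact hadj.elim
    · rcases adj_uv.mp hadj with hh | hh
      · have := A3 i (hh ▸ j.isLt); rw [hh] at this; simp only [lab]; omega
      · have := A2 j (hh ▸ i.isLt); rw [hh] at this; simp only [lab]; omega
    · exact hadj.elim
    · have := B i i.isLt; exact this
    · exact hadj.elim
    · have := B j j.isLt; simp only [lab]; omega
    · exact hadj.elim
  · intro x y hdist
    obtain ⟨hne, w, h1, h2⟩ := common_of_dist_eq_two hdist
    have hvne : ∀ {a b : Fin n}, (Sum.inl a : MycVert (Fin n)) ≠ Sum.inl b → (a:ℕ) ≠ b := by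
      intro a b hab hv; exact hab (by simp [Fin.ext_iff, hv])
    have hune : ∀ {a b : Fin n},
        (Sum.inr (Sum.inl a) : MycVert (Fin n)) ≠ Sum.inr (Sum.inl b) → (a:ℕ) ≠ b := by
      intro a b hab hv; exact hab (by simp [Fin.ext_iff, hv])
    rcases x with i | i | x0 <;> rcases y with j | j | y0 <;> rcases w with m | m | w0
    -- x = v i, y = v j
    · rcases adj_vv.mp h1 with p1 | p1 <;> rcases adj_vv.mp h2 with p2 | p2
      · have := D1 i (by omega); simp only [lab]
        rw [show (j:ℕ) = (i:ℕ)+2 by omega] at *; exact this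
      · exact absurd (Fin.ext (by omega) : i = j) (fun hh => hne (hh ▸ rfl))
      · exact absurd (Fin.ext (by omega) : i = j) (fun hh => hne (hh ▸ rfl))
      · have := D1 j (by omega); simp only [lab]
        rw [show (i:ℕ) = (j:ℕ)+2 by omega] at *; exact this.symm
    · rcases adj_vu.mp h1 with p1 | p1 <;> rcases adj_uv.mp h2 with p2 | p2
      · have := D1 i (by omega); simp only [lab]
        rw [show (j:ℕ) = (i:ℕ)+2 by omega] at *; exact this
      · exact absurd (Fin.ext (by omega) : i = j) (fun hh => hne (hh ▸ rfl))
      · exact absurd (Fin.ext (by omega) : i = j) (fun hh => hne (hh ▸ rfl))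
      · have := D1 j (by omega); simp only [lab]
        rw [show (i:ℕ) = (j:ℕ)+2 by omega] at *; exact this.symm
    · exact h1.elim
    -- x = v i, y = u j
    · rcases adj_vv.mp h1 with p1 | p1 <;> rcases adj_vu.mp h2 with p2 | p2
      · have := D2 i (by omega); simp only [lab]
        rw [show (j:ℕ) = (i:ℕ)+2 by omega] at *; exact this
      · have := E1 i i.isLt; simp only [lab]
        rw [show (j:ℕ) = (i:ℕ) by omega] at *; exact this
      · have := E1 i i.isLt; simp only [lab]
        rw [show (j:ℕ) = (i:ℕ) by omega] at *; exact this
      · have := D3 j (by omega); simp only [lab]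
        rw [show (i:ℕ) = (j:ℕ)+2 by omega] at *; exact this
    · exact h2.elim
    · exact h1.elim
    -- x = v i, y = z
    · exact h2.elim
    · exact E2 i i.isLt
    · exact h1.elim
    -- x = u i, y = v j
    · rcases adj_uv.mp h1 with p1 | p1 <;> rcases adj_vv.mp h2 with p2 | p2
      · have := D3 i (by omega); simp only [lab]
        rw [show (j:ℕ) = (i:ℕ)+2 by omega] at *; exact this.symm
      · have := E1 i i.isLt; simp only [lab]
        rw [show (j:ℕ) = (i:ℕ) by omega] at *; exact this.symm
      · have := E1 i i.isLt; simp only [lab]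
        rw [show (j:ℕ) = (i:ℕ) by omega] at *; exact this.symm
      · have := D2 j (by omega); simp only [lab]
        rw [show (i:ℕ) = (j:ℕ)+2 by omega] at *; exact this.symm
    · exact h1.elim
    · exact h2.elim
    -- x = u i, y = u j
    · rcases adj_uv.mp h1 with p1 | p1 <;> rcases adj_vu.mp h2 with p2 | p2 <;>
        exact C i j i.isLt j.isLt (hune hne)
    · exact h1.elim
    · exact C i j i.isLt j.isLt (hune hne)
    -- x = u i, y = z
    · exact h2.elim
    · exact h1.elim
    · exact h2.elim
    -- x = z, y = v j
    · exact h1.elim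
    · exact (E2 j j.isLt).symm
    · exact h1.elim
    -- x = z, y = u j
    · exact h1.elim
    · exact h2.elim
    · exact h1.elim
    -- x = z, y = z
    · exact h1.elim
    · exact (hne (by rcases x0; rcases y0; rfl)).elim
    · exact h1.elim

end MPl
namespace MPl

lemma lb_generic {n k : ℕ} (hn : 1 ≤ n) (f : MycVert (Fin n) → ℕ)
    (hf : IsL21Labeling (MP n) f) (hb : ∀ v, f v ≤ k) : n + 1 ≤ k := by
  by_contra hcon
  push_neg at hcon
  set c := f (.inr (.inr ())) with hcdef
  have hinj : Function.Injective (fun i : Fin n => f (.inr (.inl i))) := by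
    intro i j hij
    by_contra hne
    exact hf.2 _ _ (dUU i j hne) hij
  have hcz : ∀ i : Fin n, 2 ≤ ((f (.inr (.inl i)) : ℤ) - c).natAbs :=
    fun i => hf.1 _ _ adj_uz
  set S : Finset ℕ := insert c (Finset.image (fun i : Fin n => f (.inr (.inl i))) Finset.univ)
    with hS
  have hcard : S.card = n + 1 := by
    rw [hS, Finset.card_insert_of_notMem, Finset.card_image_of_injective _ hinj,
      Finset.card_univ, Fintype.card_fin]
    intro hmem
    simp only [Finset.mem_image] at hmem
    obtain ⟨i, _, hi⟩ := hmem
    have := hcz i; rw [hi] at this; omega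
  have hsub : S ⊆ Finset.range (k+1) := by
    intro x hx
    rw [hS] at hx; simp only [Finset.mem_insert, Finset.mem_image] at hx
    rw [Finset.mem_range]
    rcases hx with rfl | ⟨i, _, rfl⟩
    · exact Nat.lt_succ_of_le (hb _)
    · exact Nat.lt_succ_of_le (hb _)
  have hk : k = n := by
    have := Finset.card_le_card hsub; rw [hcard, Finset.card_range] at this; omega
  have hSeq : S = Finset.range (k+1) :=
    Finset.eq_of_subset_of_card_le hsub (by rw [hcard, Finset.card_range]; omega)
  rcases Nat.eq_zero_or_pos c with h0 | h1
  · have h1m : (1:ℕ) ∈ S := by rw [hSeq, Finset.mem_range]; omega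
    rw [hS] at h1m; simp only [Finset.mem_insert, Finset.mem_image] at h1m
    rcases h1m with h | ⟨i, _, hi⟩
    · omega
    · have := hcz i; rw [hi] at this; omega
  · have h1m : c - 1 ∈ S := by
      rw [hSeq, Finset.mem_range]
      have := hb (.inr (.inr ())); omega
    rw [hS] at h1m; simp only [Finset.mem_insert, Finset.mem_image] at h1m
    rcases h1m with h | ⟨i, _, hi⟩
    · omega
    · have := hcz i; rw [hi] at this; omega

lemma flip {V : Type} (G : SimpleGraph V) (f : V → ℕ) (k : ℕ)
    (hf : IsL21Labeling G f) (hb : ∀ v, f v ≤ k) :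
    IsL21Labeling G (fun v => k - f v) ∧ ∀ v, k - f v ≤ k := by
  refine ⟨⟨?_, ?_⟩, fun v => by omega⟩
  · intro x y hadj
    have := hf.1 x y hadj; have hx := hb x; have hy := hb y; simp only; omega
  · intro x y hd
    have := hf.2 x y hd; have hx := hb x; have hy := hb y; simp only; omega

lemma lambda_eq {V : Type} (G : SimpleGraph V) (m : ℕ)
    (hub : ∃ f, IsL21Labeling G f ∧ ∀ v, f v ≤ m)
    (hlb : ∀ k (f : V → ℕ), IsL21Labeling G f → (∀ v, f v ≤ k) → m ≤ k) :
    lambdaNumber G = m := by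
  apply le_antisymm
  · exact Nat.sInf_le hub
  · apply le_csInf ⟨m, hub⟩
    rintro k ⟨f, hf, hb⟩
    exact hlb k f hf hb

end MPl
namespace MPl

-- big-n labeling of the original path vertices
def gBig (n : ℕ) : ℕ → ℕ
  | 0 => 5
  | 1 => 7
  | 2 => 1
  | 3 => n+1
  | 4 => 2
  | 5 => 4
  | (i+6) => 2*((i+6)%3)+1

lemma gBig_six (n i : ℕ) : gBig n (i+6) = 2*((i+6)%3)+1 := rfl

lemma ub_big (n : ℕ) (hn : 7 ≤ n) :
    ∃ f, IsL21Labeling (MP n) f ∧ ∀ v, f v ≤ n + 1 := by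
  refine ⟨lab (gBig n) (fun i => i + 2) 0, ?_, ?_⟩
  · apply builder
    · rintro (_|_|_|_|_|_|i) hi <;>
        simp [gBig, Nat.add_mod] <;> omega
    · rintro (_|_|_|_|_|_|i) hi <;>
        simp [gBig, Nat.add_mod] <;> omega
    · rintro (_|_|_|_|_|_|i) hi <;>
        simp [gBig, Nat.add_mod] <;> omega
    · intro i _; simp; omega
    · intro i j _ _ hij; simp; omega
    · rintro (_|_|_|_|_|_|i) hi <;>
        simp [gBig, Nat.add_mod] <;> omega
    · rintro (_|_|_|_|_|_|i) hi <;>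
        simp [gBig, Nat.add_mod] <;> omega
    · rintro (_|_|_|_|_|_|i) hi <;>
        simp [gBig, Nat.add_mod] <;> omega
    · rintro (_|_|_|_|_|_|i) hi <;>
        simp [gBig, Nat.add_mod] <;> omega
    · rintro (_|_|_|_|_|_|i) hi <;>
        simp [gBig, Nat.add_mod] <;> omega
  · rintro (i | i | x0)
    · show gBig n i.val ≤ n + 1
      have := i.isLt
      rcases i with ⟨(_|_|_|_|_|_|m), hm⟩ <;> simp [gBig] <;> omega
    · show i.val + 2 ≤ n + 1
      have := i.isLt; omega
    · show 0 ≤ n+1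
      omega

-- small cases
def gOf (l : List ℕ) (i : ℕ) : ℕ := l.getD i 0

lemma ub_small (n : ℕ) (gl hl : List ℕ) (c m : ℕ)
    (hgl : gl.length = n) (hhl : hl.length = n)
    (A1 : ∀ i, i+1 < n → 2 ≤ ((gOf gl i : ℤ) - gOf gl (i+1)).natAbs)
    (A2 : ∀ i, i+1 < n → 2 ≤ ((gOf gl i : ℤ) - gOf hl (i+1)).natAbs)
    (A3 : ∀ i, i+1 < n → 2 ≤ ((gOf gl (i+1) : ℤ) - gOf hl i).natAbs)
    (B : ∀ i, i < n → 2 ≤ ((gOf hl i : ℤ) - c).natAbs)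
    (C : ∀ i j, i < n → j < n → i ≠ j → gOf hl i ≠ gOf hl j)
    (D1 : ∀ i, i+2 < n → gOf gl i ≠ gOf gl (i+2))
    (D2 : ∀ i, i+2 < n → gOf gl i ≠ gOf hl (i+2))
    (D3 : ∀ i, i+2 < n → gOf gl (i+2) ≠ gOf hl i)
    (E1 : ∀ i, i < n → gOf gl i ≠ gOf hl i)
    (E2 : ∀ i, i < n → gOf gl i ≠ c)
    (Bd : ∀ i, i < n → gOf gl i ≤ m ∧ gOf hl i ≤ m) (hc : c ≤ m) :
    ∃ f, IsL21Labeling (MP n) f ∧ ∀ v, f v ≤ m := by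
  refine ⟨lab (gOf gl) (gOf hl) c, builder n _ _ _ A1 A2 A3 B C D1 D2 D3 E1 E2, ?_⟩
  rintro (i | i | x0)
  · exact (Bd i.val i.isLt).1
  · exact (Bd i.val i.isLt).2
  · exact hc

end MPl
namespace MPl

lemma ub3 : ∃ f, IsL21Labeling (MP 3) f ∧ ∀ v, f v ≤ 6 := by
  apply ub_small 3 [1,6,3] [2,5,4] 0 6 rfl rfl <;>
    first
      | (intro i hi; have hub : i < 7 := by omega
         interval_cases i <;> first | decide | (exact absurd hi (by decide)))
      | (intro i j hi hj hij; interval_cases i <;> interval_cases j <;>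
          first | decide | omega)
      | decide

lemma ub4 : ∃ f, IsL21Labeling (MP 4) f ∧ ∀ v, f v ≤ 6 := by
  apply ub_small 4 [4,1,6,3] [3,2,5,4] 0 6 rfl rfl <;>
    first
      | (intro i hi; have hub : i < 7 := by omega
         interval_cases i <;> first | decide | (exact absurd hi (by decide)))
      | (intro i j hi hj hij; interval_cases i <;> interval_cases j <;>
          first | decide | omega)
      | decide

lemma ub5 : ∃ f, IsL21Labeling (MP 5) f ∧ ∀ v, f v ≤ 7 := by
  apply ub_small 5 [1,4,7,1,3] [2,3,6,5,4] 0 7 rfl rfl <;>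
    first
      | (intro i hi; have hub : i < 7 := by omega
         interval_cases i <;> first | decide | (exact absurd hi (by decide)))
      | (intro i j hi hj hij; interval_cases i <;> interval_cases j <;>
          first | decide | omega)
      | decide

lemma ub6 : ∃ f, IsL21Labeling (MP 6) f ∧ ∀ v, f v ≤ 7 := by
  apply ub_small 6 [1,4,7,1,3,6] [2,3,6,5,4,7] 0 7 rfl rfl <;>
    first
      | (intro i hi; have hub : i < 7 := by omega
         interval_cases i <;> first | decide | (exact absurd hi (by decide)))
      | (intro i j hi hj hij; interval_cases i <;> interval_cases j <;>
          first | decide | omega)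
      | decide

end MPl
set_option maxRecDepth 10000

namespace MPl

lemma pig5 (lo x0 x1 x2 x3 x4 : ℕ) (h01 : x0 ≠ x1) (h02 : x0 ≠ x2) (h03 : x0 ≠ x3) (h04 : x0 ≠ x4) (h12 : x1 ≠ x2) (h13 : x1 ≠ x3) (h14 : x1 ≠ x4) (h23 : x2 ≠ x3) (h24 : x2 ≠ x4) (h34 : x3 ≠ x4)
    (r0 : lo ≤ x0 ∧ x0 < lo + 4) (r1 : lo ≤ x1 ∧ x1 < lo + 4) (r2 : lo ≤ x2 ∧ x2 < lo + 4) (r3 : lo ≤ x3 ∧ x3 < lo + 4) (r4 : lo ≤ x4 ∧ x4 < lo + 4) : False := by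
  have hp : List.Pairwise (· ≠ ·) [x0,x1,x2,x3,x4] := by
    refine List.Pairwise.cons ?_ (List.Pairwise.cons ?_ (List.Pairwise.cons ?_ (List.Pairwise.cons ?_ (List.Pairwise.cons ?_ List.Pairwise.nil)))) <;>
    · intro a ha; fin_cases ha <;> assumption
  have := pigeon_list _ lo 4 hp (by intro x hx; fin_cases hx <;> omega)
  simp at this

lemma pig6 (lo x0 x1 x2 x3 x4 x5 : ℕ) (h01 : x0 ≠ x1) (h02 : x0 ≠ x2) (h03 : x0 ≠ x3) (h04 : x0 ≠ x4) (h05 : x0 ≠ x5) (h12 : x1 ≠ x2) (h13 : x1 ≠ x3) (h14 : x1 ≠ x4) (h15 : x1 ≠ x5) (h23 : x2 ≠ x3) (h24 : x2 ≠ x4) (h25 : x2 ≠ x5) (h34 : x3 ≠ x4) (h35 : x3 ≠ x5) (h45 : x4 ≠ x5)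
    (r0 : lo ≤ x0 ∧ x0 < lo + 5) (r1 : lo ≤ x1 ∧ x1 < lo + 5) (r2 : lo ≤ x2 ∧ x2 < lo + 5) (r3 : lo ≤ x3 ∧ x3 < lo + 5) (r4 : lo ≤ x4 ∧ x4 < lo + 5) (r5 : lo ≤ x5 ∧ x5 < lo + 5) : False := by
  have hp : List.Pairwise (· ≠ ·) [x0,x1,x2,x3,x4,x5] := by
    refine List.Pairwise.cons ?_ (List.Pairwise.cons ?_ (List.Pairwise.cons ?_ (List.Pairwise.cons ?_ (List.Pairwise.cons ?_ (List.Pairwise.cons ?_ List.Pairwise.nil))))) <;>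
    · intro a ha; fin_cases ha <;> assumption
  have := pigeon_list _ lo 5 hp (by intro x hx; fin_cases hx <;> omega)
  simp at this

lemma pig7 (lo x0 x1 x2 x3 x4 x5 x6 : ℕ) (h01 : x0 ≠ x1) (h02 : x0 ≠ x2) (h03 : x0 ≠ x3) (h04 : x0 ≠ x4) (h05 : x0 ≠ x5) (h06 : x0 ≠ x6) (h12 : x1 ≠ x2) (h13 : x1 ≠ x3) (h14 : x1 ≠ x4) (h15 : x1 ≠ x5) (h16 : x1 ≠ x6) (h23 : x2 ≠ x3) (h24 : x2 ≠ x4) (h25 : x2 ≠ x5) (h26 : x2 ≠ x6) (h34 : x3 ≠ x4) (h35 : x3 ≠ x5) (h36 : x3 ≠ x6) (h45 : x4 ≠ x5) (h46 : x4 ≠ x6) (h56 : x5 ≠ x6)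
    (r0 : lo ≤ x0 ∧ x0 < lo + 6) (r1 : lo ≤ x1 ∧ x1 < lo + 6) (r2 : lo ≤ x2 ∧ x2 < lo + 6) (r3 : lo ≤ x3 ∧ x3 < lo + 6) (r4 : lo ≤ x4 ∧ x4 < lo + 6) (r5 : lo ≤ x5 ∧ x5 < lo + 6) (r6 : lo ≤ x6 ∧ x6 < lo + 6) : False := by
  have hp : List.Pairwise (· ≠ ·) [x0,x1,x2,x3,x4,x5,x6] := by
    refine List.Pairwise.cons ?_ (List.Pairwise.cons ?_ (List.Pairwise.cons ?_ (List.Pairwise.cons ?_ (List.Pairwise.cons ?_ (List.Pairwise.cons ?_ (List.Pairwise.cons ?_ List.Pairwise.nil)))))) <;>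
    · intro a ha; fin_cases ha <;> assumption
  have := pigeon_list _ lo 6 hp (by intro x hx; fin_cases hx <;> omega)
  simp at this

lemma pig8 (lo x0 x1 x2 x3 x4 x5 x6 x7 : ℕ) (h01 : x0 ≠ x1) (h02 : x0 ≠ x2) (h03 : x0 ≠ x3) (h04 : x0 ≠ x4) (h05 : x0 ≠ x5) (h06 : x0 ≠ x6) (h07 : x0 ≠ x7) (h12 : x1 ≠ x2) (h13 : x1 ≠ x3) (h14 : x1 ≠ x4) (h15 : x1 ≠ x5) (h16 : x1 ≠ x6) (h17 : x1 ≠ x7) (h23 : x2 ≠ x3) (h24 : x2 ≠ x4) (h25 : x2 ≠ x5) (h26 : x2 ≠ x6) (h27 : x2 ≠ x7) (h34 : x3 ≠ x4) (h35 : x3 ≠ x5) (h36 : x3 ≠ x6) (h37 : x3 ≠ x7) (h45 : x4 ≠ x5) (h46 : x4 ≠ x6) (h47 : x4 ≠ x7) (h56 : x5 ≠ x6) (h57 : x5 ≠ x7) (h67 : x6 ≠ x7)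
    (r0 : lo ≤ x0 ∧ x0 < lo + 7) (r1 : lo ≤ x1 ∧ x1 < lo + 7) (r2 : lo ≤ x2 ∧ x2 < lo + 7) (r3 : lo ≤ x3 ∧ x3 < lo + 7) (r4 : lo ≤ x4 ∧ x4 < lo + 7) (r5 : lo ≤ x5 ∧ x5 < lo + 7) (r6 : lo ≤ x6 ∧ x6 < lo + 7) (r7 : lo ≤ x7 ∧ x7 < lo + 7) : False := by
  have hp : List.Pairwise (· ≠ ·) [x0,x1,x2,x3,x4,x5,x6,x7] := by
    refine List.Pairwise.cons ?_ (List.Pairwise.cons ?_ (List.Pairwise.cons ?_ (List.Pairwise.cons ?_ (List.Pairwise.cons ?_ (List.Pairwise.cons ?_ (List.Pairwise.cons ?_ (List.Pairwise.cons ?_ List.Pairwise.nil))))))) <;>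
    · intro a ha; fin_cases ha <;> assumption
  have := pigeon_list _ lo 7 hp (by intro x hx; fin_cases hx <;> omega)
  simp at this

lemma lb3 : ∀ (k : ℕ) (f : MycVert (Fin 3) → ℕ), IsL21Labeling (MP 3) f → (∀ v, f v ≤ k) → 6 ≤ k := by
  intro k f hf hb
  by_contra hcon
  push_neg at hcon
  have Bc : f (.inr (.inr ())) ≤ k := hb _
  have Bb0 : f (.inr (.inl 0)) ≤ k := hb _
  have Bb1 : f (.inr (.inl 1)) ≤ k := hb _
  have Bb2 : f (.inr (.inl 2)) ≤ k := hb _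
  have Ba0 : f (.inl 0) ≤ k := hb _
  have Ba1 : f (.inl 1) ≤ k := hb _
  have Ba2 : f (.inl 2) ≤ k := hb _
  have Ecb0 : 2 ≤ ((f (.inr (.inr ())) : ℤ) - f (.inr (.inl 0))).natAbs := hf.1 _ _ (adj_zu)
  have Ecb1 : 2 ≤ ((f (.inr (.inr ())) : ℤ) - f (.inr (.inl 1))).natAbs := hf.1 _ _ (adj_zu)
  have Ecb2 : 2 ≤ ((f (.inr (.inr ())) : ℤ) - f (.inr (.inl 2))).natAbs := hf.1 _ _ (adj_zu)
  have Dca0 : f (.inr (.inr ())) ≠ f (.inl 0) := hf.2 _ _ (dist_eq_two_of _ (w := (.inr (.inl 1))) (adj_zu) (adj_uv.mpr (by decide)) (by decide) (fun h => h))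
  have Dca1 : f (.inr (.inr ())) ≠ f (.inl 1) := hf.2 _ _ (dist_eq_two_of _ (w := (.inr (.inl 0))) (adj_zu) (adj_uv.mpr (by decide)) (by decide) (fun h => h))
  have Dca2 : f (.inr (.inr ())) ≠ f (.inl 2) := hf.2 _ _ (dist_eq_two_of _ (w := (.inr (.inl 1))) (adj_zu) (adj_uv.mpr (by decide)) (by decide) (fun h => h))
  have Db0b1 : f (.inr (.inl 0)) ≠ f (.inr (.inl 1)) := hf.2 _ _ (dist_eq_two_of _ (w := (.inr (.inr ()))) (adj_uz) (adj_zu) (by decide) (fun h => h))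
  have Db0b2 : f (.inr (.inl 0)) ≠ f (.inr (.inl 2)) := hf.2 _ _ (dist_eq_two_of _ (w := (.inr (.inr ()))) (adj_uz) (adj_zu) (by decide) (fun h => h))
  have Db0a0 : f (.inr (.inl 0)) ≠ f (.inl 0) := hf.2 _ _ (dist_eq_two_of _ (w := (.inl 1)) (adj_uv.mpr (by decide)) (adj_vv.mpr (by decide)) (by decide) (by rw [adj_uv]; decide))
  have Eb0a1 : 2 ≤ ((f (.inr (.inl 0)) : ℤ) - f (.inl 1)).natAbs := hf.1 _ _ (adj_uv.mpr (by decide))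
  have Db0a2 : f (.inr (.inl 0)) ≠ f (.inl 2) := hf.2 _ _ (dist_eq_two_of _ (w := (.inl 1)) (adj_uv.mpr (by decide)) (adj_vv.mpr (by decide)) (by decide) (by rw [adj_uv]; decide))
  have Db1b2 : f (.inr (.inl 1)) ≠ f (.inr (.inl 2)) := hf.2 _ _ (dist_eq_two_of _ (w := (.inr (.inr ()))) (adj_uz) (adj_zu) (by decide) (fun h => h))
  have Eb1a0 : 2 ≤ ((f (.inr (.inl 1)) : ℤ) - f (.inl 0)).natAbs := hf.1 _ _ (adj_uv.mpr (by decide))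
  have Db1a1 : f (.inr (.inl 1)) ≠ f (.inl 1) := hf.2 _ _ (dist_eq_two_of _ (w := (.inl 0)) (adj_uv.mpr (by decide)) (adj_vv.mpr (by decide)) (by decide) (by rw [adj_uv]; decide))
  have Eb1a2 : 2 ≤ ((f (.inr (.inl 1)) : ℤ) - f (.inl 2)).natAbs := hf.1 _ _ (adj_uv.mpr (by decide))
  have Db2a0 : f (.inr (.inl 2)) ≠ f (.inl 0) := hf.2 _ _ (dist_eq_two_of _ (w := (.inl 1)) (adj_uv.mpr (by decide)) (adj_vv.mpr (by decide)) (by decide) (by rw [adj_uv]; decide))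
  have Eb2a1 : 2 ≤ ((f (.inr (.inl 2)) : ℤ) - f (.inl 1)).natAbs := hf.1 _ _ (adj_uv.mpr (by decide))
  have Db2a2 : f (.inr (.inl 2)) ≠ f (.inl 2) := hf.2 _ _ (dist_eq_two_of _ (w := (.inl 1)) (adj_uv.mpr (by decide)) (adj_vv.mpr (by decide)) (by decide) (by rw [adj_uv]; decide))
  have Ea0a1 : 2 ≤ ((f (.inl 0) : ℤ) - f (.inl 1)).natAbs := hf.1 _ _ (adj_vv.mpr (by decide))
  have Da0a2 : f (.inl 0) ≠ f (.inl 2) := hf.2 _ _ (dist_eq_two_of _ (w := (.inr (.inl 1))) (adj_vu.mpr (by decide)) (adj_uv.mpr (by decide)) (by decide) (by rw [adj_vv]; decide))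
  have Ea1a2 : 2 ≤ ((f (.inl 1) : ℤ) - f (.inl 2)).natAbs := hf.1 _ _ (adj_vv.mpr (by decide))
  have Ncb0 : f (.inr (.inr ())) ≠ f (.inr (.inl 0)) := by clear * - Ecb0; omega
  have Ncb1 : f (.inr (.inr ())) ≠ f (.inr (.inl 1)) := by clear * - Ecb1; omega
  have Ncb2 : f (.inr (.inr ())) ≠ f (.inr (.inl 2)) := by clear * - Ecb2; omega
  have Nb0a1 : f (.inr (.inl 0)) ≠ f (.inl 1) := by clear * - Eb0a1; omega
  have Nb1a0 : f (.inr (.inl 1)) ≠ f (.inl 0) := by clear * - Eb1a0; omega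
  have Nb1a2 : f (.inr (.inl 1)) ≠ f (.inl 2) := by clear * - Eb1a2; omega
  have Nb2a1 : f (.inr (.inl 2)) ≠ f (.inl 1) := by clear * - Eb2a1; omega
  have Na0a1 : f (.inl 0) ≠ f (.inl 1) := by clear * - Ea0a1; omega
  have Na1a2 : f (.inl 1) ≠ f (.inl 2) := by clear * - Ea1a2; omega
  refine pig7 0 (f (.inr (.inr ()))) (f (.inr (.inl 0))) (f (.inr (.inl 1))) (f (.inr (.inl 2))) (f (.inl 0)) (f (.inl 1)) (f (.inl 2)) Ncb0 Ncb1 Ncb2 Dca0 Dca1 Dca2 Db0b1 Db0b2 Db0a0 Nb0a1 Db0a2 Db1b2 Nb1a0 Db1a1 Nb1a2 Db2a0 Nb2a1 Db2a2 Na0a1 Da0a2 Na1a2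
    (by clear * - Bc hcon; omega)
    (by clear * - Bb0 hcon; omega)
    (by clear * - Bb1 hcon; omega)
    (by clear * - Bb2 hcon; omega)
    (by clear * - Ba0 hcon; omega)
    (by clear * - Ba1 hcon; omega)
    (by clear * - Ba2 hcon; omega)

lemma final5 (b0 b1 b3 b4 : ℕ)
    (r0 : 3 ≤ b0 ∧ b0 < 3 + 4) (r1 : 3 ≤ b1 ∧ b1 < 3 + 4)
    (r3 : 3 ≤ b3 ∧ b3 < 3 + 4) (r4 : 3 ≤ b4 ∧ b4 < 3 + 4)
    (d01 : b0 ≠ b1) (d03 : b0 ≠ b3) (d04 : b0 ≠ b4)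
    (d13 : b1 ≠ b3) (d14 : b1 ≠ b4) (d34 : b3 ≠ b4)
    (g1 : 2 ≤ ((b0:ℤ) - b4).natAbs) (g2 : 2 ≤ ((b1:ℤ) - b3).natAbs)
    (g3 : 2 ≤ ((b3:ℤ) - b4).natAbs) (g4 : 2 ≤ ((b0:ℤ) - b1).natAbs) : False := by
  omega

lemma lb4aux (f : MycVert (Fin 4) → ℕ) (hf : IsL21Labeling (MP 4) f)
    (hb : ∀ v, f v ≤ 5) (hz : f (.inr (.inr ())) = 0) : False := by
  have Bb0 : f (.inr (.inl 0)) ≤ 5 := hb _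
  have Bb1 : f (.inr (.inl 1)) ≤ 5 := hb _
  have Bb2 : f (.inr (.inl 2)) ≤ 5 := hb _
  have Bb3 : f (.inr (.inl 3)) ≤ 5 := hb _
  have Ba1 : f (.inl 1) ≤ 5 := hb _
  have Ba2 : f (.inl 2) ≤ 5 := hb _
  have Ecb0 : 2 ≤ ((f (.inr (.inr ())) : ℤ) - f (.inr (.inl 0))).natAbs := hf.1 _ _ (adj_zu)
  have Ecb1 : 2 ≤ ((f (.inr (.inr ())) : ℤ) - f (.inr (.inl 1))).natAbs := hf.1 _ _ (adj_zu)
  have Ecb2 : 2 ≤ ((f (.inr (.inr ())) : ℤ) - f (.inr (.inl 2))).natAbs := hf.1 _ _ (adj_zu)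
  have Ecb3 : 2 ≤ ((f (.inr (.inr ())) : ℤ) - f (.inr (.inl 3))).natAbs := hf.1 _ _ (adj_zu)
  have Dca1 : f (.inr (.inr ())) ≠ f (.inl 1) := hf.2 _ _ (dist_eq_two_of _ (w := (.inr (.inl 0))) (adj_zu) (adj_uv.mpr (by decide)) (by decide) (fun h => h))
  have Dca2 : f (.inr (.inr ())) ≠ f (.inl 2) := hf.2 _ _ (dist_eq_two_of _ (w := (.inr (.inl 1))) (adj_zu) (adj_uv.mpr (by decide)) (by decide) (fun h => h))
  have Db0b1 : f (.inr (.inl 0)) ≠ f (.inr (.inl 1)) := hf.2 _ _ (dist_eq_two_of _ (w := (.inr (.inr ()))) (adj_uz) (adj_zu) (by decide) (fun h => h))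
  have Db0b2 : f (.inr (.inl 0)) ≠ f (.inr (.inl 2)) := hf.2 _ _ (dist_eq_two_of _ (w := (.inr (.inr ()))) (adj_uz) (adj_zu) (by decide) (fun h => h))
  have Db0b3 : f (.inr (.inl 0)) ≠ f (.inr (.inl 3)) := hf.2 _ _ (dist_eq_two_of _ (w := (.inr (.inr ()))) (adj_uz) (adj_zu) (by decide) (fun h => h))
  have Eb0a1 : 2 ≤ ((f (.inr (.inl 0)) : ℤ) - f (.inl 1)).natAbs := hf.1 _ _ (adj_uv.mpr (by decide))
  have Db0a2 : f (.inr (.inl 0)) ≠ f (.inl 2) := hf.2 _ _ (dist_eq_two_of _ (w := (.inl 1)) (adj_uv.mpr (by decide)) (adj_vv.mpr (by decide)) (by decide) (by rw [adj_uv]; decide))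
  have Db1b2 : f (.inr (.inl 1)) ≠ f (.inr (.inl 2)) := hf.2 _ _ (dist_eq_two_of _ (w := (.inr (.inr ()))) (adj_uz) (adj_zu) (by decide) (fun h => h))
  have Db1b3 : f (.inr (.inl 1)) ≠ f (.inr (.inl 3)) := hf.2 _ _ (dist_eq_two_of _ (w := (.inr (.inr ()))) (adj_uz) (adj_zu) (by decide) (fun h => h))
  have Db1a1 : f (.inr (.inl 1)) ≠ f (.inl 1) := hf.2 _ _ (dist_eq_two_of _ (w := (.inl 0)) (adj_uv.mpr (by decide)) (adj_vv.mpr (by decide)) (by decide) (by rw [adj_uv]; decide))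
  have Eb1a2 : 2 ≤ ((f (.inr (.inl 1)) : ℤ) - f (.inl 2)).natAbs := hf.1 _ _ (adj_uv.mpr (by decide))
  have Db2b3 : f (.inr (.inl 2)) ≠ f (.inr (.inl 3)) := hf.2 _ _ (dist_eq_two_of _ (w := (.inr (.inr ()))) (adj_uz) (adj_zu) (by decide) (fun h => h))
  have Eb2a1 : 2 ≤ ((f (.inr (.inl 2)) : ℤ) - f (.inl 1)).natAbs := hf.1 _ _ (adj_uv.mpr (by decide))
  have Db2a2 : f (.inr (.inl 2)) ≠ f (.inl 2) := hf.2 _ _ (dist_eq_two_of _ (w := (.inl 1)) (adj_uv.mpr (by decide)) (adj_vv.mpr (by decide)) (by decide) (by rw [adj_uv]; decide))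
  have Db3a1 : f (.inr (.inl 3)) ≠ f (.inl 1) := hf.2 _ _ (dist_eq_two_of _ (w := (.inl 2)) (adj_uv.mpr (by decide)) (adj_vv.mpr (by decide)) (by decide) (by rw [adj_uv]; decide))
  have Eb3a2 : 2 ≤ ((f (.inr (.inl 3)) : ℤ) - f (.inl 2)).natAbs := hf.1 _ _ (adj_uv.mpr (by decide))
  have Ea1a2 : 2 ≤ ((f (.inl 1) : ℤ) - f (.inl 2)).natAbs := hf.1 _ _ (adj_vv.mpr (by decide))
  have R0 : 2 ≤ f (.inr (.inl 0)) ∧ f (.inr (.inl 0)) < 2 + 4 := by clear * - Ecb0 hz Bb0; omega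
  have R1 : 2 ≤ f (.inr (.inl 1)) ∧ f (.inr (.inl 1)) < 2 + 4 := by clear * - Ecb1 hz Bb1; omega
  have R2 : 2 ≤ f (.inr (.inl 2)) ∧ f (.inr (.inl 2)) < 2 + 4 := by clear * - Ecb2 hz Bb2; omega
  have R3 : 2 ≤ f (.inr (.inl 3)) ∧ f (.inr (.inl 3)) < 2 + 4 := by clear * - Ecb3 hz Bb3; omega
  have ha1 : f (.inl 1) = 1 := by
    by_contra hx
    have N0 : f (.inl 1) ≠ f (.inr (.inl 0)) := by clear * - Eb0a1; omega
    have N2 : f (.inl 1) ≠ f (.inr (.inl 2)) := by clear * - Eb2a1; omega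
    have hr : 2 ≤ f (.inl 1) ∧ f (.inl 1) < 2 + 4 := by clear * - Dca1 hz hx Ba1; omega
    exact pig5 2 (f (.inl 1)) (f (.inr (.inl 0))) (f (.inr (.inl 1))) (f (.inr (.inl 2))) (f (.inr (.inl 3)))
      N0 Db1a1.symm N2 Db3a1.symm Db0b1 Db0b2 Db0b3 Db1b2 Db1b3 Db2b3 hr R0 R1 R2 R3
  have ha2 : f (.inl 2) = 1 := by
    by_contra hx
    have N1 : f (.inl 2) ≠ f (.inr (.inl 1)) := by clear * - Eb1a2; omega
    have N3 : f (.inl 2) ≠ f (.inr (.inl 3)) := by clear * - Eb3a2; omega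
    have hr : 2 ≤ f (.inl 2) ∧ f (.inl 2) < 2 + 4 := by clear * - Dca2 hz hx Ba2; omega
    exact pig5 2 (f (.inl 2)) (f (.inr (.inl 0))) (f (.inr (.inl 1))) (f (.inr (.inl 2))) (f (.inr (.inl 3)))
      Db0a2.symm N1 Db2a2.symm N3 Db0b1 Db0b2 Db0b3 Db1b2 Db1b3 Db2b3 hr R0 R1 R2 R3
  clear * - Ea1a2 ha1 ha2; omega

lemma lb4 : ∀ (k : ℕ) (f : MycVert (Fin 4) → ℕ), IsL21Labeling (MP 4) f → (∀ v, f v ≤ k) → 6 ≤ k := by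
  intro k f hf hb
  by_contra hcon
  push_neg at hcon
  have hb5 : ∀ v, f v ≤ 5 := fun v => by have := hb v; clear * - this hcon; omega
  have Bc : f (.inr (.inr ())) ≤ 5 := hb5 _
  have Bb0 : f (.inr (.inl 0)) ≤ 5 := hb5 _
  have Bb1 : f (.inr (.inl 1)) ≤ 5 := hb5 _
  have Bb2 : f (.inr (.inl 2)) ≤ 5 := hb5 _
  have Bb3 : f (.inr (.inl 3)) ≤ 5 := hb5 _
  have Ecb0 : 2 ≤ ((f (.inr (.inr ())) : ℤ) - f (.inr (.inl 0))).natAbs := hf.1 _ _ (adj_zu)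
  have Ecb1 : 2 ≤ ((f (.inr (.inr ())) : ℤ) - f (.inr (.inl 1))).natAbs := hf.1 _ _ (adj_zu)
  have Ecb2 : 2 ≤ ((f (.inr (.inr ())) : ℤ) - f (.inr (.inl 2))).natAbs := hf.1 _ _ (adj_zu)
  have Ecb3 : 2 ≤ ((f (.inr (.inr ())) : ℤ) - f (.inr (.inl 3))).natAbs := hf.1 _ _ (adj_zu)
  have Db0b1 : f (.inr (.inl 0)) ≠ f (.inr (.inl 1)) := hf.2 _ _ (dist_eq_two_of _ (w := (.inr (.inr ()))) (adj_uz) (adj_zu) (by decide) (fun h => h))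
  have Db0b2 : f (.inr (.inl 0)) ≠ f (.inr (.inl 2)) := hf.2 _ _ (dist_eq_two_of _ (w := (.inr (.inr ()))) (adj_uz) (adj_zu) (by decide) (fun h => h))
  have Db0b3 : f (.inr (.inl 0)) ≠ f (.inr (.inl 3)) := hf.2 _ _ (dist_eq_two_of _ (w := (.inr (.inr ()))) (adj_uz) (adj_zu) (by decide) (fun h => h))
  have Db1b2 : f (.inr (.inl 1)) ≠ f (.inr (.inl 2)) := hf.2 _ _ (dist_eq_two_of _ (w := (.inr (.inr ()))) (adj_uz) (adj_zu) (by decide) (fun h => h))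
  have Db1b3 : f (.inr (.inl 1)) ≠ f (.inr (.inl 3)) := hf.2 _ _ (dist_eq_two_of _ (w := (.inr (.inr ()))) (adj_uz) (adj_zu) (by decide) (fun h => h))
  have Db2b3 : f (.inr (.inl 2)) ≠ f (.inr (.inl 3)) := hf.2 _ _ (dist_eq_two_of _ (w := (.inr (.inr ()))) (adj_uz) (adj_zu) (by decide) (fun h => h))
  have hsplit : f (.inr (.inr ())) = 0 ∨ f (.inr (.inr ())) = 5 := by
    by_contra hcc
    push_neg at hcc
    have hc1 : 1 ≤ f (.inr (.inr ())) ∧ f (.inr (.inr ())) ≤ 4 := by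
      clear * - hcc Bc; omega
    have NC0m : f (.inr (.inl 0)) ≠ f (.inr (.inr ())) - 1 := by clear * - Ecb0 hc1; omega
    have NC0c : f (.inr (.inl 0)) ≠ f (.inr (.inr ())) := by clear * - Ecb0; omega
    have NC0p : f (.inr (.inl 0)) ≠ f (.inr (.inr ())) + 1 := by clear * - Ecb0 hc1; omega
    have NC1m : f (.inr (.inl 1)) ≠ f (.inr (.inr ())) - 1 := by clear * - Ecb1 hc1; omega
    have NC1c : f (.inr (.inl 1)) ≠ f (.inr (.inr ())) := by clear * - Ecb1; omega
    have NC1p : f (.inr (.inl 1)) ≠ f (.inr (.inr ())) + 1 := by clear * - Ecb1 hc1; omega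
    have NC2m : f (.inr (.inl 2)) ≠ f (.inr (.inr ())) - 1 := by clear * - Ecb2 hc1; omega
    have NC2c : f (.inr (.inl 2)) ≠ f (.inr (.inr ())) := by clear * - Ecb2; omega
    have NC2p : f (.inr (.inl 2)) ≠ f (.inr (.inr ())) + 1 := by clear * - Ecb2 hc1; omega
    have NC3m : f (.inr (.inl 3)) ≠ f (.inr (.inr ())) - 1 := by clear * - Ecb3 hc1; omega
    have NC3c : f (.inr (.inl 3)) ≠ f (.inr (.inr ())) := by clear * - Ecb3; omega
    have NC3p : f (.inr (.inl 3)) ≠ f (.inr (.inr ())) + 1 := by clear * - Ecb3 hc1; omega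
    have M45 : f (.inr (.inr ())) - 1 ≠ f (.inr (.inr ())) := by clear * - hc1; omega
    have M46 : f (.inr (.inr ())) - 1 ≠ f (.inr (.inr ())) + 1 := by clear * - hc1; omega
    have M56 : f (.inr (.inr ())) ≠ f (.inr (.inr ())) + 1 := by clear * - hc1; omega
    have Rg0 : 0 ≤ f (.inr (.inl 0)) ∧ f (.inr (.inl 0)) < 0 + 6 := by clear * - Bb0; omega
    have Rg1 : 0 ≤ f (.inr (.inl 1)) ∧ f (.inr (.inl 1)) < 0 + 6 := by clear * - Bb1; omega
    have Rg2 : 0 ≤ f (.inr (.inl 2)) ∧ f (.inr (.inl 2)) < 0 + 6 := by clear * - Bb2; omega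
    have Rg3 : 0 ≤ f (.inr (.inl 3)) ∧ f (.inr (.inl 3)) < 0 + 6 := by clear * - Bb3; omega
    have Rgm : 0 ≤ f (.inr (.inr ())) - 1 ∧ f (.inr (.inr ())) - 1 < 0 + 6 := by clear * - hc1; omega
    have Rgc : 0 ≤ f (.inr (.inr ())) ∧ f (.inr (.inr ())) < 0 + 6 := by clear * - hc1; omega
    have Rgp : 0 ≤ f (.inr (.inr ())) + 1 ∧ f (.inr (.inr ())) + 1 < 0 + 6 := by clear * - hc1; omega
    exact pig7 0 (f (.inr (.inl 0))) (f (.inr (.inl 1))) (f (.inr (.inl 2))) (f (.inr (.inl 3))) (f (.inr (.inr ())) - 1) (f (.inr (.inr ()))) (f (.inr (.inr ())) + 1) Db0b1 Db0b2 Db0b3 NC0m NC0c NC0p Db1b2 Db1b3 NC1m NC1c NC1p Db2b3 NC2m NC2c NC2p NC3m NC3c NC3p M45 M46 M56 Rg0 Rg1 Rg2 Rg3 Rgm Rgc Rgp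
  rcases hsplit with h0 | h5
  · exact lb4aux f hf hb5 h0
  · obtain ⟨hf2, hb2⟩ := flip (MP 4) f 5 hf hb5
    exact lb4aux _ hf2 hb2 (by show 5 - f (Sum.inr (Sum.inr ())) = 0; rw [h5])

lemma lb5aux (f : MycVert (Fin 5) → ℕ) (hf : IsL21Labeling (MP 5) f)
    (hb : ∀ v, f v ≤ 6) (hz : f (.inr (.inr ())) = 0) : False := by
  have Bb0 : f (.inr (.inl 0)) ≤ 6 := hb _
  have Bb1 : f (.inr (.inl 1)) ≤ 6 := hb _
  have Bb2 : f (.inr (.inl 2)) ≤ 6 := hb _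
  have Bb3 : f (.inr (.inl 3)) ≤ 6 := hb _
  have Bb4 : f (.inr (.inl 4)) ≤ 6 := hb _
  have Ba0 : f (.inl 0) ≤ 6 := hb _
  have Ba1 : f (.inl 1) ≤ 6 := hb _
  have Ba2 : f (.inl 2) ≤ 6 := hb _
  have Ba3 : f (.inl 3) ≤ 6 := hb _
  have Ba4 : f (.inl 4) ≤ 6 := hb _
  have Ecb0 : 2 ≤ ((f (.inr (.inr ())) : ℤ) - f (.inr (.inl 0))).natAbs := hf.1 _ _ (adj_zu)
  have Ecb1 : 2 ≤ ((f (.inr (.inr ())) : ℤ) - f (.inr (.inl 1))).natAbs := hf.1 _ _ (adj_zu)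
  have Ecb2 : 2 ≤ ((f (.inr (.inr ())) : ℤ) - f (.inr (.inl 2))).natAbs := hf.1 _ _ (adj_zu)
  have Ecb3 : 2 ≤ ((f (.inr (.inr ())) : ℤ) - f (.inr (.inl 3))).natAbs := hf.1 _ _ (adj_zu)
  have Ecb4 : 2 ≤ ((f (.inr (.inr ())) : ℤ) - f (.inr (.inl 4))).natAbs := hf.1 _ _ (adj_zu)
  have Dca0 : f (.inr (.inr ())) ≠ f (.inl 0) := hf.2 _ _ (dist_eq_two_of _ (w := (.inr (.inl 1))) (adj_zu) (adj_uv.mpr (by decide)) (by decide) (fun h => h))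
  have Dca1 : f (.inr (.inr ())) ≠ f (.inl 1) := hf.2 _ _ (dist_eq_two_of _ (w := (.inr (.inl 0))) (adj_zu) (adj_uv.mpr (by decide)) (by decide) (fun h => h))
  have Dca2 : f (.inr (.inr ())) ≠ f (.inl 2) := hf.2 _ _ (dist_eq_two_of _ (w := (.inr (.inl 1))) (adj_zu) (adj_uv.mpr (by decide)) (by decide) (fun h => h))
  have Dca3 : f (.inr (.inr ())) ≠ f (.inl 3) := hf.2 _ _ (dist_eq_two_of _ (w := (.inr (.inl 2))) (adj_zu) (adj_uv.mpr (by decide)) (by decide) (fun h => h))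
  have Dca4 : f (.inr (.inr ())) ≠ f (.inl 4) := hf.2 _ _ (dist_eq_two_of _ (w := (.inr (.inl 3))) (adj_zu) (adj_uv.mpr (by decide)) (by decide) (fun h => h))
  have Db0b1 : f (.inr (.inl 0)) ≠ f (.inr (.inl 1)) := hf.2 _ _ (dist_eq_two_of _ (w := (.inr (.inr ()))) (adj_uz) (adj_zu) (by decide) (fun h => h))
  have Db0b2 : f (.inr (.inl 0)) ≠ f (.inr (.inl 2)) := hf.2 _ _ (dist_eq_two_of _ (w := (.inr (.inr ()))) (adj_uz) (adj_zu) (by decide) (fun h => h))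
  have Db0b3 : f (.inr (.inl 0)) ≠ f (.inr (.inl 3)) := hf.2 _ _ (dist_eq_two_of _ (w := (.inr (.inr ()))) (adj_uz) (adj_zu) (by decide) (fun h => h))
  have Db0b4 : f (.inr (.inl 0)) ≠ f (.inr (.inl 4)) := hf.2 _ _ (dist_eq_two_of _ (w := (.inr (.inr ()))) (adj_uz) (adj_zu) (by decide) (fun h => h))
  have Db0a0 : f (.inr (.inl 0)) ≠ f (.inl 0) := hf.2 _ _ (dist_eq_two_of _ (w := (.inl 1)) (adj_uv.mpr (by decide)) (adj_vv.mpr (by decide)) (by decide) (by rw [adj_uv]; decide))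
  have Eb0a1 : 2 ≤ ((f (.inr (.inl 0)) : ℤ) - f (.inl 1)).natAbs := hf.1 _ _ (adj_uv.mpr (by decide))
  have Db0a2 : f (.inr (.inl 0)) ≠ f (.inl 2) := hf.2 _ _ (dist_eq_two_of _ (w := (.inl 1)) (adj_uv.mpr (by decide)) (adj_vv.mpr (by decide)) (by decide) (by rw [adj_uv]; decide))
  have Db1b2 : f (.inr (.inl 1)) ≠ f (.inr (.inl 2)) := hf.2 _ _ (dist_eq_two_of _ (w := (.inr (.inr ()))) (adj_uz) (adj_zu) (by decide) (fun h => h))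
  have Db1b3 : f (.inr (.inl 1)) ≠ f (.inr (.inl 3)) := hf.2 _ _ (dist_eq_two_of _ (w := (.inr (.inr ()))) (adj_uz) (adj_zu) (by decide) (fun h => h))
  have Db1b4 : f (.inr (.inl 1)) ≠ f (.inr (.inl 4)) := hf.2 _ _ (dist_eq_two_of _ (w := (.inr (.inr ()))) (adj_uz) (adj_zu) (by decide) (fun h => h))
  have Eb1a0 : 2 ≤ ((f (.inr (.inl 1)) : ℤ) - f (.inl 0)).natAbs := hf.1 _ _ (adj_uv.mpr (by decide))
  have Db1a1 : f (.inr (.inl 1)) ≠ f (.inl 1) := hf.2 _ _ (dist_eq_two_of _ (w := (.inl 0)) (adj_uv.mpr (by decide)) (adj_vv.mpr (by decide)) (by decide) (by rw [adj_uv]; decide))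
  have Eb1a2 : 2 ≤ ((f (.inr (.inl 1)) : ℤ) - f (.inl 2)).natAbs := hf.1 _ _ (adj_uv.mpr (by decide))
  have Db1a3 : f (.inr (.inl 1)) ≠ f (.inl 3) := hf.2 _ _ (dist_eq_two_of _ (w := (.inl 2)) (adj_uv.mpr (by decide)) (adj_vv.mpr (by decide)) (by decide) (by rw [adj_uv]; decide))
  have Db2b3 : f (.inr (.inl 2)) ≠ f (.inr (.inl 3)) := hf.2 _ _ (dist_eq_two_of _ (w := (.inr (.inr ()))) (adj_uz) (adj_zu) (by decide) (fun h => h))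
  have Db2b4 : f (.inr (.inl 2)) ≠ f (.inr (.inl 4)) := hf.2 _ _ (dist_eq_two_of _ (w := (.inr (.inr ()))) (adj_uz) (adj_zu) (by decide) (fun h => h))
  have Db2a0 : f (.inr (.inl 2)) ≠ f (.inl 0) := hf.2 _ _ (dist_eq_two_of _ (w := (.inl 1)) (adj_uv.mpr (by decide)) (adj_vv.mpr (by decide)) (by decide) (by rw [adj_uv]; decide))
  have Eb2a1 : 2 ≤ ((f (.inr (.inl 2)) : ℤ) - f (.inl 1)).natAbs := hf.1 _ _ (adj_uv.mpr (by decide))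
  have Db2a2 : f (.inr (.inl 2)) ≠ f (.inl 2) := hf.2 _ _ (dist_eq_two_of _ (w := (.inl 1)) (adj_uv.mpr (by decide)) (adj_vv.mpr (by decide)) (by decide) (by rw [adj_uv]; decide))
  have Eb2a3 : 2 ≤ ((f (.inr (.inl 2)) : ℤ) - f (.inl 3)).natAbs := hf.1 _ _ (adj_uv.mpr (by decide))
  have Db2a4 : f (.inr (.inl 2)) ≠ f (.inl 4) := hf.2 _ _ (dist_eq_two_of _ (w := (.inl 3)) (adj_uv.mpr (by decide)) (adj_vv.mpr (by decide)) (by decide) (by rw [adj_uv]; decide))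
  have Db3b4 : f (.inr (.inl 3)) ≠ f (.inr (.inl 4)) := hf.2 _ _ (dist_eq_two_of _ (w := (.inr (.inr ()))) (adj_uz) (adj_zu) (by decide) (fun h => h))
  have Db3a1 : f (.inr (.inl 3)) ≠ f (.inl 1) := hf.2 _ _ (dist_eq_two_of _ (w := (.inl 2)) (adj_uv.mpr (by decide)) (adj_vv.mpr (by decide)) (by decide) (by rw [adj_uv]; decide))
  have Eb3a2 : 2 ≤ ((f (.inr (.inl 3)) : ℤ) - f (.inl 2)).natAbs := hf.1 _ _ (adj_uv.mpr (by decide))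
  have Db3a3 : f (.inr (.inl 3)) ≠ f (.inl 3) := hf.2 _ _ (dist_eq_two_of _ (w := (.inl 2)) (adj_uv.mpr (by decide)) (adj_vv.mpr (by decide)) (by decide) (by rw [adj_uv]; decide))
  have Eb3a4 : 2 ≤ ((f (.inr (.inl 3)) : ℤ) - f (.inl 4)).natAbs := hf.1 _ _ (adj_uv.mpr (by decide))
  have Db4a2 : f (.inr (.inl 4)) ≠ f (.inl 2) := hf.2 _ _ (dist_eq_two_of _ (w := (.inl 3)) (adj_uv.mpr (by decide)) (adj_vv.mpr (by decide)) (by decide) (by rw [adj_uv]; decide))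
  have Eb4a3 : 2 ≤ ((f (.inr (.inl 4)) : ℤ) - f (.inl 3)).natAbs := hf.1 _ _ (adj_uv.mpr (by decide))
  have Db4a4 : f (.inr (.inl 4)) ≠ f (.inl 4) := hf.2 _ _ (dist_eq_two_of _ (w := (.inl 3)) (adj_uv.mpr (by decide)) (adj_vv.mpr (by decide)) (by decide) (by rw [adj_uv]; decide))
  have Ea0a1 : 2 ≤ ((f (.inl 0) : ℤ) - f (.inl 1)).natAbs := hf.1 _ _ (adj_vv.mpr (by decide))
  have Da0a2 : f (.inl 0) ≠ f (.inl 2) := hf.2 _ _ (dist_eq_two_of _ (w := (.inr (.inl 1))) (adj_vu.mpr (by decide)) (adj_uv.mpr (by decide)) (by decide) (by rw [adj_vv]; decide))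
  have Ea1a2 : 2 ≤ ((f (.inl 1) : ℤ) - f (.inl 2)).natAbs := hf.1 _ _ (adj_vv.mpr (by decide))
  have Ea2a3 : 2 ≤ ((f (.inl 2) : ℤ) - f (.inl 3)).natAbs := hf.1 _ _ (adj_vv.mpr (by decide))
  have Da2a4 : f (.inl 2) ≠ f (.inl 4) := hf.2 _ _ (dist_eq_two_of _ (w := (.inr (.inl 3))) (adj_vu.mpr (by decide)) (adj_uv.mpr (by decide)) (by decide) (by rw [adj_vv]; decide))
  have Ea3a4 : 2 ≤ ((f (.inl 3) : ℤ) - f (.inl 4)).natAbs := hf.1 _ _ (adj_vv.mpr (by decide))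
  have R0 : 2 ≤ f (.inr (.inl 0)) ∧ f (.inr (.inl 0)) < 2 + 5 := by clear * - Ecb0 hz Bb0; omega
  have R1 : 2 ≤ f (.inr (.inl 1)) ∧ f (.inr (.inl 1)) < 2 + 5 := by clear * - Ecb1 hz Bb1; omega
  have R2 : 2 ≤ f (.inr (.inl 2)) ∧ f (.inr (.inl 2)) < 2 + 5 := by clear * - Ecb2 hz Bb2; omega
  have R3 : 2 ≤ f (.inr (.inl 3)) ∧ f (.inr (.inl 3)) < 2 + 5 := by clear * - Ecb3 hz Bb3; omega
  have R4 : 2 ≤ f (.inr (.inl 4)) ∧ f (.inr (.inl 4)) < 2 + 5 := by clear * - Ecb4 hz Bb4; omega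
  have ha2 : f (.inl 2) = 1 := by
    by_contra hx
    have N1 : f (.inl 2) ≠ f (.inr (.inl 1)) := by clear * - Eb1a2; omega
    have N3 : f (.inl 2) ≠ f (.inr (.inl 3)) := by clear * - Eb3a2; omega
    have hr : 2 ≤ f (.inl 2) ∧ f (.inl 2) < 2 + 5 := by clear * - Dca2 hz hx Ba2; omega
    exact pig6 2 (f (.inl 2)) (f (.inr (.inl 0))) (f (.inr (.inl 1))) (f (.inr (.inl 2))) (f (.inr (.inl 3))) (f (.inr (.inl 4)))
      Db0a2.symm N1 Db2a2.symm N3 Db4a2.symm Db0b1 Db0b2 Db0b3 Db0b4 Db1b2 Db1b3 Db1b4 Db2b3 Db2b4 Db3b4 hr R0 R1 R2 R3 R4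
  have ha1 : f (.inl 1) = f (.inr (.inl 4)) := by
    by_contra hx
    have N0 : f (.inl 1) ≠ f (.inr (.inl 0)) := by clear * - Eb0a1; omega
    have N2 : f (.inl 1) ≠ f (.inr (.inl 2)) := by clear * - Eb2a1; omega
    have hr : 2 ≤ f (.inl 1) ∧ f (.inl 1) < 2 + 5 := by clear * - Ea1a2 ha2 Dca1 hz Ba1; omega
    exact pig6 2 (f (.inl 1)) (f (.inr (.inl 0))) (f (.inr (.inl 1))) (f (.inr (.inl 2))) (f (.inr (.inl 3))) (f (.inr (.inl 4)))
      N0 Db1a1.symm N2 Db3a1.symm hx Db0b1 Db0b2 Db0b3 Db0b4 Db1b2 Db1b3 Db1b4 Db2b3 Db2b4 Db3b4 hr R0 R1 R2 R3 R4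
  have ha3 : f (.inl 3) = f (.inr (.inl 0)) := by
    by_contra hx
    have N2 : f (.inl 3) ≠ f (.inr (.inl 2)) := by clear * - Eb2a3; omega
    have N4 : f (.inl 3) ≠ f (.inr (.inl 4)) := by clear * - Eb4a3; omega
    have hr : 2 ≤ f (.inl 3) ∧ f (.inl 3) < 2 + 5 := by clear * - Ea2a3 ha2 Dca3 hz Ba3; omega
    exact pig6 2 (f (.inl 3)) (f (.inr (.inl 0))) (f (.inr (.inl 1))) (f (.inr (.inl 2))) (f (.inr (.inl 3))) (f (.inr (.inl 4)))
      hx Db1a3.symm N2 Db3a3.symm N4 Db0b1 Db0b2 Db0b3 Db0b4 Db1b2 Db1b3 Db1b4 Db2b3 Db2b4 Db3b4 hr R0 R1 R2 R3 R4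
  have T0 : 3 ≤ f (.inr (.inl 0)) ∧ f (.inr (.inl 0)) < 3 + 4 := by clear * - ha3 Ea2a3 ha2 Dca3 hz Bb0; omega
  have T1 : 3 ≤ f (.inr (.inl 1)) ∧ f (.inr (.inl 1)) < 3 + 4 := by clear * - Eb1a2 ha2 R1 Bb1; omega
  have T3 : 3 ≤ f (.inr (.inl 3)) ∧ f (.inr (.inl 3)) < 3 + 4 := by clear * - Eb3a2 ha2 R3 Bb3; omega
  have T4 : 3 ≤ f (.inr (.inl 4)) ∧ f (.inr (.inl 4)) < 3 + 4 := by clear * - ha1 Ea1a2 ha2 Dca1 hz Bb4; omega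
  have hb2 : f (.inr (.inl 2)) = 2 := by
    by_contra hx
    have hr : 3 ≤ f (.inr (.inl 2)) ∧ f (.inr (.inl 2)) < 3 + 4 := by clear * - R2 hx Bb2; omega
    exact pig5 3 (f (.inr (.inl 0))) (f (.inr (.inl 1))) (f (.inr (.inl 2))) (f (.inr (.inl 3))) (f (.inr (.inl 4)))
      Db0b1 Db0b2 Db0b3 Db0b4 Db1b2 Db1b3 Db1b4 Db2b3 Db2b4 Db3b4 T0 T1 hr T3 T4
  have ha0 : f (.inl 0) = f (.inr (.inl 3)) := by
    by_contra hx
    have N1 : f (.inl 0) ≠ f (.inr (.inl 1)) := by clear * - Eb1a0; omega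
    have N4 : f (.inl 0) ≠ f (.inr (.inl 4)) := by clear * - Ea0a1 ha1; omega
    have hr : 3 ≤ f (.inl 0) ∧ f (.inl 0) < 3 + 4 := by clear * - Dca0 hz Da0a2 ha2 Db2a0 hb2 Ba0; omega
    exact pig5 3 (f (.inl 0)) (f (.inr (.inl 0))) (f (.inr (.inl 1))) (f (.inr (.inl 3))) (f (.inr (.inl 4)))
      Db0a0.symm N1 hx N4 Db0b1 Db0b3 Db0b4 Db1b3 Db1b4 Db3b4 hr T0 T1 T3 T4
  have ha4 : f (.inl 4) = f (.inr (.inl 1)) := by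
    by_contra hx
    have N0 : f (.inl 4) ≠ f (.inr (.inl 0)) := by clear * - Ea3a4 ha3; omega
    have N3 : f (.inl 4) ≠ f (.inr (.inl 3)) := by clear * - Eb3a4; omega
    have hr : 3 ≤ f (.inl 4) ∧ f (.inl 4) < 3 + 4 := by clear * - Dca4 hz Da2a4 ha2 Db2a4 hb2 Ba4; omega
    exact pig5 3 (f (.inl 4)) (f (.inr (.inl 0))) (f (.inr (.inl 1))) (f (.inr (.inl 3))) (f (.inr (.inl 4)))
      N0 hx N3 Db4a4.symm Db0b1 Db0b3 Db0b4 Db1b3 Db1b4 Db3b4 hr T0 T1 T3 T4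
  have g1 : 2 ≤ ((f (.inr (.inl 0)) : ℤ) - f (.inr (.inl 4))).natAbs := by clear * - Eb0a1 ha1; omega
  have g2 : 2 ≤ ((f (.inr (.inl 1)) : ℤ) - f (.inr (.inl 3))).natAbs := by clear * - Eb1a0 ha0; omega
  have g3 : 2 ≤ ((f (.inr (.inl 3)) : ℤ) - f (.inr (.inl 4))).natAbs := by clear * - Ea0a1 ha0 ha1; omega
  have g4 : 2 ≤ ((f (.inr (.inl 0)) : ℤ) - f (.inr (.inl 1))).natAbs := by clear * - Ea3a4 ha3 ha4; omega
  exact final5 _ _ _ _ T0 T1 T3 T4 Db0b1 Db0b3 Db0b4 Db1b3 Db1b4 Db3b4 g1 g2 g3 g4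

lemma lb5 : ∀ (k : ℕ) (f : MycVert (Fin 5) → ℕ), IsL21Labeling (MP 5) f → (∀ v, f v ≤ k) → 7 ≤ k := by
  intro k f hf hb
  by_contra hcon
  push_neg at hcon
  have hb6 : ∀ v, f v ≤ 6 := fun v => by have := hb v; clear * - this hcon; omega
  have Bc : f (.inr (.inr ())) ≤ 6 := hb6 _
  have Bb0 : f (.inr (.inl 0)) ≤ 6 := hb6 _
  have Bb1 : f (.inr (.inl 1)) ≤ 6 := hb6 _
  have Bb2 : f (.inr (.inl 2)) ≤ 6 := hb6 _
  have Bb3 : f (.inr (.inl 3)) ≤ 6 := hb6 _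
  have Bb4 : f (.inr (.inl 4)) ≤ 6 := hb6 _
  have Ecb0 : 2 ≤ ((f (.inr (.inr ())) : ℤ) - f (.inr (.inl 0))).natAbs := hf.1 _ _ (adj_zu)
  have Ecb1 : 2 ≤ ((f (.inr (.inr ())) : ℤ) - f (.inr (.inl 1))).natAbs := hf.1 _ _ (adj_zu)
  have Ecb2 : 2 ≤ ((f (.inr (.inr ())) : ℤ) - f (.inr (.inl 2))).natAbs := hf.1 _ _ (adj_zu)
  have Ecb3 : 2 ≤ ((f (.inr (.inr ())) : ℤ) - f (.inr (.inl 3))).natAbs := hf.1 _ _ (adj_zu)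
  have Ecb4 : 2 ≤ ((f (.inr (.inr ())) : ℤ) - f (.inr (.inl 4))).natAbs := hf.1 _ _ (adj_zu)
  have Db0b1 : f (.inr (.inl 0)) ≠ f (.inr (.inl 1)) := hf.2 _ _ (dist_eq_two_of _ (w := (.inr (.inr ()))) (adj_uz) (adj_zu) (by decide) (fun h => h))
  have Db0b2 : f (.inr (.inl 0)) ≠ f (.inr (.inl 2)) := hf.2 _ _ (dist_eq_two_of _ (w := (.inr (.inr ()))) (adj_uz) (adj_zu) (by decide) (fun h => h))
  have Db0b3 : f (.inr (.inl 0)) ≠ f (.inr (.inl 3)) := hf.2 _ _ (dist_eq_two_of _ (w := (.inr (.inr ()))) (adj_uz) (adj_zu) (by decide) (fun h => h))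
  have Db0b4 : f (.inr (.inl 0)) ≠ f (.inr (.inl 4)) := hf.2 _ _ (dist_eq_two_of _ (w := (.inr (.inr ()))) (adj_uz) (adj_zu) (by decide) (fun h => h))
  have Db1b2 : f (.inr (.inl 1)) ≠ f (.inr (.inl 2)) := hf.2 _ _ (dist_eq_two_of _ (w := (.inr (.inr ()))) (adj_uz) (adj_zu) (by decide) (fun h => h))
  have Db1b3 : f (.inr (.inl 1)) ≠ f (.inr (.inl 3)) := hf.2 _ _ (dist_eq_two_of _ (w := (.inr (.inr ()))) (adj_uz) (adj_zu) (by decide) (fun h => h))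
  have Db1b4 : f (.inr (.inl 1)) ≠ f (.inr (.inl 4)) := hf.2 _ _ (dist_eq_two_of _ (w := (.inr (.inr ()))) (adj_uz) (adj_zu) (by decide) (fun h => h))
  have Db2b3 : f (.inr (.inl 2)) ≠ f (.inr (.inl 3)) := hf.2 _ _ (dist_eq_two_of _ (w := (.inr (.inr ()))) (adj_uz) (adj_zu) (by decide) (fun h => h))
  have Db2b4 : f (.inr (.inl 2)) ≠ f (.inr (.inl 4)) := hf.2 _ _ (dist_eq_two_of _ (w := (.inr (.inr ()))) (adj_uz) (adj_zu) (by decide) (fun h => h))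
  have Db3b4 : f (.inr (.inl 3)) ≠ f (.inr (.inl 4)) := hf.2 _ _ (dist_eq_two_of _ (w := (.inr (.inr ()))) (adj_uz) (adj_zu) (by decide) (fun h => h))
  have hsplit : f (.inr (.inr ())) = 0 ∨ f (.inr (.inr ())) = 6 := by
    by_contra hcc
    push_neg at hcc
    have hc1 : 1 ≤ f (.inr (.inr ())) ∧ f (.inr (.inr ())) ≤ 5 := by
      clear * - hcc Bc; omega
    have NC0m : f (.inr (.inl 0)) ≠ f (.inr (.inr ())) - 1 := by clear * - Ecb0 hc1; omega
    have NC0c : f (.inr (.inl 0)) ≠ f (.inr (.inr ())) := by clear * - Ecb0; omega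
    have NC0p : f (.inr (.inl 0)) ≠ f (.inr (.inr ())) + 1 := by clear * - Ecb0 hc1; omega
    have NC1m : f (.inr (.inl 1)) ≠ f (.inr (.inr ())) - 1 := by clear * - Ecb1 hc1; omega
    have NC1c : f (.inr (.inl 1)) ≠ f (.inr (.inr ())) := by clear * - Ecb1; omega
    have NC1p : f (.inr (.inl 1)) ≠ f (.inr (.inr ())) + 1 := by clear * - Ecb1 hc1; omega
    have NC2m : f (.inr (.inl 2)) ≠ f (.inr (.inr ())) - 1 := by clear * - Ecb2 hc1; omega
    have NC2c : f (.inr (.inl 2)) ≠ f (.inr (.inr ())) := by clear * - Ecb2; omega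
    have NC2p : f (.inr (.inl 2)) ≠ f (.inr (.inr ())) + 1 := by clear * - Ecb2 hc1; omega
    have NC3m : f (.inr (.inl 3)) ≠ f (.inr (.inr ())) - 1 := by clear * - Ecb3 hc1; omega
    have NC3c : f (.inr (.inl 3)) ≠ f (.inr (.inr ())) := by clear * - Ecb3; omega
    have NC3p : f (.inr (.inl 3)) ≠ f (.inr (.inr ())) + 1 := by clear * - Ecb3 hc1; omega
    have NC4m : f (.inr (.inl 4)) ≠ f (.inr (.inr ())) - 1 := by clear * - Ecb4 hc1; omega
    have NC4c : f (.inr (.inl 4)) ≠ f (.inr (.inr ())) := by clear * - Ecb4; omega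
    have NC4p : f (.inr (.inl 4)) ≠ f (.inr (.inr ())) + 1 := by clear * - Ecb4 hc1; omega
    have M56 : f (.inr (.inr ())) - 1 ≠ f (.inr (.inr ())) := by clear * - hc1; omega
    have M57 : f (.inr (.inr ())) - 1 ≠ f (.inr (.inr ())) + 1 := by clear * - hc1; omega
    have M67 : f (.inr (.inr ())) ≠ f (.inr (.inr ())) + 1 := by clear * - hc1; omega
    have Rg0 : 0 ≤ f (.inr (.inl 0)) ∧ f (.inr (.inl 0)) < 0 + 7 := by clear * - Bb0; omega
    have Rg1 : 0 ≤ f (.inr (.inl 1)) ∧ f (.inr (.inl 1)) < 0 + 7 := by clear * - Bb1; omega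
    have Rg2 : 0 ≤ f (.inr (.inl 2)) ∧ f (.inr (.inl 2)) < 0 + 7 := by clear * - Bb2; omega
    have Rg3 : 0 ≤ f (.inr (.inl 3)) ∧ f (.inr (.inl 3)) < 0 + 7 := by clear * - Bb3; omega
    have Rg4 : 0 ≤ f (.inr (.inl 4)) ∧ f (.inr (.inl 4)) < 0 + 7 := by clear * - Bb4; omega
    have Rgm : 0 ≤ f (.inr (.inr ())) - 1 ∧ f (.inr (.inr ())) - 1 < 0 + 7 := by clear * - hc1; omega
    have Rgc : 0 ≤ f (.inr (.inr ())) ∧ f (.inr (.inr ())) < 0 + 7 := by clear * - hc1; omega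
    have Rgp : 0 ≤ f (.inr (.inr ())) + 1 ∧ f (.inr (.inr ())) + 1 < 0 + 7 := by clear * - hc1; omega
    exact pig8 0 (f (.inr (.inl 0))) (f (.inr (.inl 1))) (f (.inr (.inl 2))) (f (.inr (.inl 3))) (f (.inr (.inl 4))) (f (.inr (.inr ())) - 1) (f (.inr (.inr ()))) (f (.inr (.inr ())) + 1) Db0b1 Db0b2 Db0b3 Db0b4 NC0m NC0c NC0p Db1b2 Db1b3 Db1b4 NC1m NC1c NC1p Db2b3 Db2b4 NC2m NC2c NC2p Db3b4 NC3m NC3c NC3p NC4m NC4c NC4p M56 M57 M67 Rg0 Rg1 Rg2 Rg3 Rg4 Rgm Rgc Rgp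
  rcases hsplit with h0 | h6
  · exact lb5aux f hf hb6 h0
  · obtain ⟨hf2, hb2⟩ := flip (MP 5) f 6 hf hb6
    exact lb5aux _ hf2 hb2 (by show 6 - f (Sum.inr (Sum.inr ())) = 0; rw [h6])

end MPl

/-- `λ(M(P_n)) = 6` for `n ∈ {3,4}`, `λ(M(P_5)) = 7`, and `λ(M(P_n)) = n + 1` for `n ≥ 6`. -/
theorem lambdaNumber_mycielski_pathGraph :
    lambdaNumber (mycielski (SimpleGraph.pathGraph 3)) = 6 ∧
    lambdaNumber (mycielski (SimpleGraph.pathGraph 4)) = 6 ∧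
    lambdaNumber (mycielski (SimpleGraph.pathGraph 5)) = 7 ∧
    ∀ n : ℕ, 6 ≤ n → lambdaNumber (mycielski (SimpleGraph.pathGraph n)) = n + 1 := by
  refine ⟨?_, ?_, ?_, ?_⟩
  · exact MPl.lambda_eq _ 6 MPl.ub3 MPl.lb3
  · exact MPl.lambda_eq _ 6 MPl.ub4 MPl.lb4
  · exact MPl.lambda_eq _ 7 MPl.ub5 MPl.lb5
  · intro n hn
    rcases eq_or_lt_of_le hn with h6 | h7
    · rw [← h6]
      exact MPl.lambda_eq _ 7 MPl.ub6 (fun k f hf hb => MPl.lb_generic (by omega) f hf hb)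
    · exact MPl.lambda_eq _ (n+1) (MPl.ub_big n (by omega))
        (fun k f hf hb => MPl.lb_generic (by omega) f hf hb)
end
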